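/- arXiv:0812.3962 — 6 statements merged into one kernel-verified Lean document; each statement's English description precedes it below -/
import Mathlib

section
/- The number of Γ₀(N)-inequivalent cusps of Γ₀(N) equals ∑_{e | N, e > 0} φ(gcd(e, N/e)), where φ is Euler's totient function. -/
open scoped MatrixGroups
open Matrix

/-- A point of `P¹(ℚ)`, modeled as a primitive integral vector (a coprime pair). -/
def PrimVec : Type := {v : Fin 2 → ℤ // IsCoprime (v 0) (v 1)}

/-- Two points of `P¹(ℚ)` are `Γ₀(N)`-equivalent if some element of `Γ₀(N)` maps one
to the other (up to sign, i.e. up to a unit scalar). -/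
def cuspRel (N : ℕ) (v w : PrimVec) : Prop :=
  ∃ γ ∈ CongruenceSubgroup.Gamma0 N, ∃ ε : ℤˣ,
    (γ : Matrix (Fin 2) (Fin 2) ℤ).mulVec v.1 = (ε : ℤ) • w.1

namespace CuspCount

/-! ### Generalities -/

lemma isUnit_intCast_zmod {n : ℕ} {x : ℤ} (h : IsCoprime x (n : ℤ)) :
    IsUnit ((x : ZMod n)) := by
  obtain ⟨u, v, huv⟩ := h
  have : ((u * x + v * n : ℤ) : ZMod n) = ((1 : ℤ) : ZMod n) := by rw [huv]
  push_cast at this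
  rw [ZMod.natCast_self, mul_zero, add_zero] at this
  exact IsUnit.of_mul_eq_one _ ((mul_comm (x : ZMod n) _) ▸ this)

lemma int_gcd_eq_of_dvd_sub {a b n : ℤ} (h : n ∣ a - b) : Int.gcd a n = Int.gcd b n := by
  have H : ∀ x y : ℤ, n ∣ x - y → Int.gcd x n ∣ Int.gcd y n := by
    intro x y hxy
    have h1 : (Int.gcd x n : ℤ) ∣ y := by
      have : (Int.gcd x n : ℤ) ∣ x - y := (Int.gcd_dvd_right _ _).trans hxy
      have h2 := Int.gcd_dvd_left (a := x) (b := n)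
      simpa using (dvd_sub h2 this)
    exact Int.natCast_dvd_natCast.mp (Int.dvd_coe_gcd h1 (Int.gcd_dvd_right _ _))
  exact Nat.dvd_antisymm (H a b h) (H b a (by simpa using (dvd_neg.mpr h)))

lemma int_gcd_unit_mul (ε : ℤˣ) (a n : ℤ) : Int.gcd ((ε : ℤ) * a) n = Int.gcd a n := by
  unfold Int.gcd
  rw [Int.natAbs_mul, Int.units_natAbs, one_mul]

lemma int_gcd_coprime_mul {D a : ℤ} {n : ℕ} (h : IsCoprime D (n : ℤ)) :
    Int.gcd (D * a) (n : ℤ) = Int.gcd a (n : ℤ) := by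
  have hD : Nat.Coprime D.natAbs n := by
    have := Int.isCoprime_iff_gcd_eq_one.mp h
    simpa [Int.gcd] using this
  unfold Int.gcd
  rw [Int.natAbs_mul]
  simpa using hD.gcd_mul_left_cancel a.natAbs

/-- Key elementary lemma: one can shift `y₀` by a multiple of `m` to make it coprime to `c`. -/
lemma exists_coprime_shift (m c : ℕ) (hc : c ≠ 0) (y₀ : ℤ)
    (h : IsCoprime y₀ ((Nat.gcd m c : ℕ) : ℤ)) :
    ∃ y : ℤ, (m : ℤ) ∣ y - y₀ ∧ IsCoprime y (c : ℤ) := by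
  classical
  set k : ℕ := ∏ ℓ ∈ c.primeFactors.filter (fun ℓ : ℕ => ¬ ((ℓ : ℤ) ∣ y₀)), ℓ with hk
  refine ⟨y₀ + m * k, by ring_nf; exact Dvd.intro k rfl, ?_⟩
  rw [Int.isCoprime_iff_gcd_eq_one]
  by_contra hg
  obtain ⟨p, hp, hpg⟩ := Nat.exists_prime_and_dvd hg
  have hpy : (p : ℤ) ∣ y₀ + m * k :=
    (Int.natCast_dvd_natCast.mpr hpg).trans (Int.gcd_dvd_left _ _)
  have hpc : (p : ℤ) ∣ (c : ℤ) := (Int.natCast_dvd_natCast.mpr hpg).trans (Int.gcd_dvd_right _ _)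
  have hpcn : p ∣ c := Int.natCast_dvd_natCast.mp hpc
  have hpInt : Prime (p : ℤ) := Int.prime_iff_natAbs_prime.mpr (by simpa using hp)
  by_cases h0 : (p : ℤ) ∣ y₀
  · have hmk : (p : ℤ) ∣ (m : ℤ) * k := by
      have := dvd_sub hpy h0
      simpa using this
    rcases hpInt.dvd_mul.mp hmk with hm | hkk
    · -- p divides m and c, hence gcd m c, contradicting coprimality with y₀
      have hpd : p ∣ Nat.gcd m c := Nat.dvd_gcd (Int.natCast_dvd_natCast.mp hm) hpcn
      have : IsUnit (p : ℤ) := h.isUnit_of_dvd' h0 ((Int.natCast_dvd_natCast.mpr hpd))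
      rw [Int.isUnit_iff] at this
      rcases this with h1 | h1 <;> [skip; skip] <;>
        · have := hp.two_le; omega
    · -- p divides k, so p is one of the primes not dividing y₀
      have hpk : p ∣ k := Int.natCast_dvd_natCast.mp hkk
      obtain ⟨ℓ, hℓmem, hpℓ⟩ := (hp.prime.dvd_finset_prod_iff _).mp hpk
      obtain ⟨hℓc, hℓy⟩ := Finset.mem_filter.mp hℓmem
      have : p = ℓ := ((Nat.prime_dvd_prime_iff_eq hp (Nat.prime_of_mem_primeFactors hℓc)).mp hpℓ)
      exact hℓy (this ▸ h0)
  · -- p is in the filter set, so p divides k, hence p divides y₀, contradiction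
    have hpk : p ∣ k := Finset.dvd_prod_of_mem _
      (Finset.mem_filter.mpr ⟨Nat.mem_primeFactors.mpr ⟨hp, hpcn, hc⟩, h0⟩)
    have : (p : ℤ) ∣ y₀ := by
      have : (p : ℤ) ∣ (m : ℤ) * k := Dvd.dvd.mul_left (Int.natCast_dvd_natCast.mpr hpk) _
      simpa using dvd_sub hpy this
    exact h0 this

/-! ### The invariants -/

variable (N : ℕ)

/-- The "denominator" invariant of a cusp. -/
def cInv (v : PrimVec) : ℕ := Int.gcd (v.1 1) (N : ℤ)

def dd (c : ℕ) : ℕ := Nat.gcd c (N / c)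

/-- The integer whose residue is the second invariant of a cusp. -/
def xInt (v : PrimVec) : ℤ := v.1 0 * (v.1 1 / (cInv N v : ℤ))

variable {N}

lemma cInv_dvd (v : PrimVec) : cInv N v ∣ N := by
  have := Int.gcd_dvd_right (a := v.1 1) (b := (N : ℤ))
  exact_mod_cast this

lemma cInv_ne_zero (hN : N ≠ 0) (v : PrimVec) : cInv N v ≠ 0 := by
  simp only [cInv, ne_eq, Int.gcd_eq_zero_iff]
  exact fun h => hN (by exact_mod_cast h.2)

lemma cInv_dvd_q (v : PrimVec) : ((cInv N v : ℕ) : ℤ) ∣ v.1 1 := Int.gcd_dvd_left _ _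

lemma dd_dvd_left (c : ℕ) : dd N c ∣ c := Nat.gcd_dvd_left _ _

lemma dd_dvd_right (c : ℕ) : dd N c ∣ N / c := Nat.gcd_dvd_right _ _

lemma dd_ne_zero (hN : N ≠ 0) {c : ℕ} (hc : c ∣ N) (hc0 : c ≠ 0) : dd N c ≠ 0 := by
  have h1 : N / c ≠ 0 := by
    have := Nat.div_mul_cancel hc
    intro h0
    rw [h0, zero_mul] at this
    exact hN this.symm
  simp [dd, Nat.gcd_eq_zero_iff, h1]

lemma cInv_eq_natGcd (v : PrimVec) : cInv N v = Nat.gcd (v.1 1).natAbs N := by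
  unfold cInv Int.gcd
  simp

lemma coprime_q1 (hN : N ≠ 0) (v : PrimVec) :
    IsCoprime (v.1 1 / (cInv N v : ℤ)) (((N / cInv N v : ℕ) : ℕ) : ℤ) := by
  rw [Int.isCoprime_iff_gcd_eq_one]
  have h1 : (v.1 1 / (cInv N v : ℤ)).natAbs = (v.1 1).natAbs / cInv N v := by
    rw [Int.natAbs_ediv_of_dvd (cInv_dvd_q v)]
    simp
  unfold Int.gcd
  rw [h1]
  simp only [Int.natAbs_natCast]
  rw [cInv_eq_natGcd]
  exact Nat.coprime_div_gcd_div_gcd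
    (Nat.pos_of_ne_zero (by rw [← cInv_eq_natGcd]; exact cInv_ne_zero hN v))

lemma coprime_p_dd (v : PrimVec) : IsCoprime (v.1 0) ((dd N (cInv N v) : ℕ) : ℤ) :=
  v.2.of_isCoprime_of_dvd_right
    ((Int.natCast_dvd_natCast.mpr (dd_dvd_left _)).trans (cInv_dvd_q v))

lemma coprime_q1_dd (hN : N ≠ 0) (v : PrimVec) :
    IsCoprime (v.1 1 / (cInv N v : ℤ)) ((dd N (cInv N v) : ℕ) : ℤ) :=
  (coprime_q1 hN v).of_isCoprime_of_dvd_right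
    (Int.natCast_dvd_natCast.mpr (dd_dvd_right _))

lemma coprime_xInt (hN : N ≠ 0) (v : PrimVec) :
    IsCoprime (xInt N v) ((dd N (cInv N v) : ℕ) : ℤ) :=
  IsCoprime.mul_left (coprime_p_dd v) (coprime_q1_dd hN v)

lemma isUnit_xInt (hN : N ≠ 0) (v : PrimVec) :
    IsUnit ((xInt N v : ZMod (dd N (cInv N v)))) :=
  isUnit_intCast_zmod (coprime_xInt hN v)

/-- The data classifying a cusp: a divisor `e` of `N` and a unit mod `gcd e (N/e)`. -/
def CuspData (N : ℕ) : Type := Σ e : {e : ℕ // e ∈ N.divisors}, (ZMod (dd N e.1))ˣ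

variable (N) in
/-- The full invariant map. -/
noncomputable def fMap (hN : N ≠ 0) (v : PrimVec) : CuspData N :=
  ⟨⟨cInv N v, Nat.mem_divisors.mpr ⟨cInv_dvd v, hN⟩⟩, (isUnit_xInt hN v).unit⟩

/-- Helper to build equalities in `CuspData`. -/
lemma cuspData_ext {N : ℕ} {e₁ e₂ : {e : ℕ // e ∈ N.divisors}}
    {u₁ : (ZMod (dd N e₁.1))ˣ} {u₂ : (ZMod (dd N e₂.1))ˣ}
    (h : (e₁ : ℕ) = e₂) (x : ℤ)
    (h₁ : ((x : ℤ) : ZMod (dd N e₁.1)) = u₁) (h₂ : ((x : ℤ) : ZMod (dd N e₂.1)) = u₂) :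
    (⟨e₁, u₁⟩ : CuspData N) = ⟨e₂, u₂⟩ := by
  have he : e₁ = e₂ := Subtype.ext h
  subst he
  exact congrArg _ (Units.ext (h₁.symm.trans h₂))

/-- Helper to destruct equalities in `CuspData`. -/
lemma cuspData_eq_elim {N : ℕ} {e₁ e₂ : {e : ℕ // e ∈ N.divisors}}
    {u₁ : (ZMod (dd N e₁.1))ˣ} {u₂ : (ZMod (dd N e₂.1))ˣ}
    (h : (⟨e₁, u₁⟩ : CuspData N) = ⟨e₂, u₂⟩) {x y : ℤ}
    (h₁ : ((x : ℤ) : ZMod (dd N e₁.1)) = u₁) (h₂ : ((y : ℤ) : ZMod (dd N e₂.1)) = u₂) :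
    (e₁ : ℕ) = e₂ ∧ ((x : ℤ) : ZMod (dd N e₁.1)) = ((y : ℤ) : ZMod (dd N e₁.1)) := by
  obtain ⟨he, hu⟩ := Sigma.ext_iff.mp h
  refine ⟨congrArg Subtype.val he, ?_⟩
  cases he
  rw [h₁, h₂]
  exact congrArg Units.val (eq_of_heq hu)

/-! ### Invariance -/

lemma rel_invariants (hN : N ≠ 0) {v w : PrimVec} (h : cuspRel N v w) :
    cInv N w = cInv N v ∧
      ((xInt N w : ℤ) : ZMod (dd N (cInv N v))) = ((xInt N v : ℤ) : ZMod (dd N (cInv N v))) := by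
  obtain ⟨γ, hγ, ε, hvec⟩ := h
  have hdet : (γ : Matrix (Fin 2) (Fin 2) ℤ) 0 0 * (γ : Matrix (Fin 2) (Fin 2) ℤ) 1 1
      - (γ : Matrix (Fin 2) (Fin 2) ℤ) 0 1 * (γ : Matrix (Fin 2) (Fin 2) ℤ) 1 0 = 1 := by
    have h2 := γ.2
    rwa [Matrix.det_fin_two] at h2
  have hCdvd : (N : ℤ) ∣ (γ : Matrix (Fin 2) (Fin 2) ℤ) 1 0 := by
    have := (CongruenceSubgroup.Gamma0_mem).mp hγ
    exact_mod_cast (ZMod.intCast_zmod_eq_zero_iff_dvd _ _).mp (by exact_mod_cast this)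
  set A := (γ : Matrix (Fin 2) (Fin 2) ℤ) 0 0 with hA
  set B := (γ : Matrix (Fin 2) (Fin 2) ℤ) 0 1 with hB
  set C := (γ : Matrix (Fin 2) (Fin 2) ℤ) 1 0 with hC
  set D := (γ : Matrix (Fin 2) (Fin 2) ℤ) 1 1 with hD
  obtain ⟨k, hk⟩ := hCdvd
  have e0 : A * v.1 0 + B * v.1 1 = (ε : ℤ) * w.1 0 := by
    have := congrFun hvec 0
    simpa [Matrix.mulVec, dotProduct, Fin.sum_univ_two] using this
  have e1 : C * v.1 0 + D * v.1 1 = (ε : ℤ) * w.1 1 := by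
    have := congrFun hvec 1
    simpa [Matrix.mulVec, dotProduct, Fin.sum_univ_two] using this
  have hεsq : (ε : ℤ) * (ε : ℤ) = 1 := by
    rw [← Units.val_mul, Int.units_mul_self, Units.val_one]
  have hDcop : IsCoprime D (N : ℤ) := ⟨A, -B * k, by linear_combination hdet + B * hk⟩
  -- Step 1 : the denominators agree
  have hgcd : cInv N w = cInv N v := by
    unfold cInv
    rw [← int_gcd_unit_mul ε (w.1 1) (N : ℤ), ← e1]
    have h2 : Int.gcd (C * v.1 0 + D * v.1 1) (N : ℤ) = Int.gcd (D * v.1 1) (N : ℤ) :=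
      int_gcd_eq_of_dvd_sub ⟨k * v.1 0, by rw [hk]; ring⟩
    rw [h2, int_gcd_coprime_mul hDcop]
  refine ⟨hgcd, ?_⟩
  -- Step 2 : the numerator classes agree
  have hc0 : cInv N v ≠ 0 := cInv_ne_zero hN v
  have hcz : ((cInv N v : ℕ) : ℤ) ≠ 0 := by exact_mod_cast hc0
  have hcq : ((cInv N v : ℕ) : ℤ) ∣ v.1 1 := cInv_dvd_q v
  have hcq' : ((cInv N v : ℕ) : ℤ) ∣ w.1 1 := by
    have h5 := cInv_dvd_q (N := N) w
    rwa [hgcd] at h5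
  have hq1 : v.1 1 = ((cInv N v : ℕ) : ℤ) * (v.1 1 / ((cInv N v : ℕ) : ℤ)) :=
    (Int.mul_ediv_cancel' hcq).symm
  have hq1' : w.1 1 = ((cInv N v : ℕ) : ℤ) * (w.1 1 / ((cInv N v : ℕ) : ℤ)) :=
    (Int.mul_ediv_cancel' hcq').symm
  have hNc : (N : ℤ) = ((cInv N v : ℕ) : ℤ) * ((N / cInv N v : ℕ) : ℤ) := by
    exact_mod_cast (Nat.mul_div_cancel' (cInv_dvd v)).symm
  have e1' : ((N / cInv N v : ℕ) : ℤ) * k * v.1 0 + D * (v.1 1 / ((cInv N v : ℕ) : ℤ))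
      = (ε : ℤ) * (w.1 1 / ((cInv N v : ℕ) : ℤ)) := by
    apply mul_left_cancel₀ hcz
    linear_combination e1 - v.1 0 * hk - v.1 0 * k * hNc - D * hq1 + (ε : ℤ) * hq1'
  -- now pass to `ZMod d`
  haveI : NeZero (dd N (cInv N v)) := ⟨dd_ne_zero hN (cInv_dvd v) hc0⟩
  set d := dd N (cInv N v) with hd
  have ZC : (((cInv N v : ℕ) : ℤ) : ZMod d) = 0 := by
    rw [Int.cast_natCast]
    exact (ZMod.natCast_eq_zero_iff _ _).mpr (dd_dvd_left _)
  have ZM : (((N / cInv N v : ℕ) : ℤ) : ZMod d) = 0 := by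
    rw [Int.cast_natCast]
    exact (ZMod.natCast_eq_zero_iff _ _).mpr (dd_dvd_right _)
  have E0 := congrArg (fun x : ℤ => (x : ZMod d)) e0
  have E1 := congrArg (fun x : ℤ => (x : ZMod d)) e1'
  have HDET := congrArg (fun x : ℤ => (x : ZMod d)) hdet
  have HK := congrArg (fun x : ℤ => (x : ZMod d)) hk
  have HN := congrArg (fun x : ℤ => (x : ZMod d)) hNc
  have HQ := congrArg (fun x : ℤ => (x : ZMod d)) hq1
  have HE := congrArg (fun x : ℤ => (x : ZMod d)) hεsq
  simp only [Int.cast_add, Int.cast_mul, Int.cast_one, Int.cast_sub] at E0 E1 HDET HK HN HQ HE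
  have hxw : xInt N w = w.1 0 * (w.1 1 / ((cInv N v : ℕ) : ℤ)) := by
    unfold xInt
    rw [hgcd]
  have hxv : xInt N v = v.1 0 * (v.1 1 / ((cInv N v : ℕ) : ℤ)) := rfl
  rw [hxw, hxv]
  push_cast
  rw [ZC] at HQ
  rw [ZM] at E1
  rw [zero_mul] at HQ
  rw [zero_mul, zero_mul, zero_add] at E1
  rw [HQ, mul_zero, add_zero] at E0
  have HDET' : (A : ZMod d) * (D : ZMod d) = 1 := by
    rw [ZM, mul_zero] at HN
    rw [HN, zero_mul] at HK
    rw [HK, mul_zero, sub_zero] at HDET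
    exact HDET
  calc ((w.1 0 : ℤ) : ZMod d) * ((w.1 1 / ((cInv N v : ℕ) : ℤ) : ℤ) : ZMod d)
      = (((ε : ℤ) : ZMod d) * ((ε : ℤ) : ZMod d))
        * (((w.1 0 : ℤ) : ZMod d) * ((w.1 1 / ((cInv N v : ℕ) : ℤ) : ℤ) : ZMod d)) := by
        rw [HE, one_mul]
    _ = (((ε : ℤ) : ZMod d) * ((w.1 0 : ℤ) : ZMod d))
        * (((ε : ℤ) : ZMod d) * ((w.1 1 / ((cInv N v : ℕ) : ℤ) : ℤ) : ZMod d)) := by ring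
    _ = ((A : ZMod d) * ((v.1 0 : ℤ) : ZMod d))
        * ((D : ZMod d) * ((v.1 1 / ((cInv N v : ℕ) : ℤ) : ℤ) : ZMod d)) := by
        rw [← E0, ← E1]
    _ = ((A : ZMod d) * (D : ZMod d))
        * (((v.1 0 : ℤ) : ZMod d) * ((v.1 1 / ((cInv N v : ℕ) : ℤ) : ℤ) : ZMod d)) := by ring
    _ = ((v.1 0 : ℤ) : ZMod d) * ((v.1 1 / ((cInv N v : ℕ) : ℤ) : ℤ) : ZMod d) := by
        rw [HDET', one_mul]

lemma fMap_rel (hN : N ≠ 0) {v w : PrimVec} (h : cuspRel N v w) :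
    fMap N hN v = fMap N hN w := by
  obtain ⟨hc, hx⟩ := rel_invariants hN h
  unfold fMap
  refine cuspData_ext hc.symm (xInt N w) ?_ ?_
  · rw [hx]; exact (IsUnit.unit_spec _).symm
  · exact (IsUnit.unit_spec _).symm

/-! ### Equivalence relation facts -/

lemma cuspRel_refl (N : ℕ) (v : PrimVec) : cuspRel N v v := by
  refine ⟨1, one_mem _, 1, ?_⟩
  simp

lemma cuspRel_symm {N : ℕ} {v w : PrimVec} (h : cuspRel N v w) : cuspRel N w v := by
  obtain ⟨γ, hγ, ε, hvec⟩ := h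
  refine ⟨γ⁻¹, inv_mem hγ, ε⁻¹, ?_⟩
  have h2 := congrArg (fun x => (↑(γ⁻¹) : Matrix (Fin 2) (Fin 2) ℤ).mulVec x) hvec
  simp only [Matrix.mulVec_mulVec, Matrix.mulVec_smul] at h2
  rw [← Matrix.SpecialLinearGroup.coe_mul, inv_mul_cancel,
    Matrix.SpecialLinearGroup.coe_one, Matrix.one_mulVec] at h2
  rw [h2]
  rw [smul_smul]
  norm_cast
  rw [inv_mul_cancel, Units.val_one, one_smul]

lemma cuspRel_trans {N : ℕ} {u v w : PrimVec} (h1 : cuspRel N u v) (h2 : cuspRel N v w) :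
    cuspRel N u w := by
  obtain ⟨γ₁, hγ₁, ε₁, hv₁⟩ := h1
  obtain ⟨γ₂, hγ₂, ε₂, hv₂⟩ := h2
  refine ⟨γ₂ * γ₁, mul_mem hγ₂ hγ₁, ε₂ * ε₁, ?_⟩
  rw [Matrix.SpecialLinearGroup.coe_mul, ← Matrix.mulVec_mulVec, hv₁,
    Matrix.mulVec_smul, hv₂, smul_smul]
  norm_cast
  rw [mul_comm]

/-! ### Canonical representatives -/

def pairVec (a : ℤ) (c : ℕ) (h : IsCoprime a (c : ℤ)) : PrimVec :=
  ⟨![a, (c : ℤ)], by simpa using h⟩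

lemma cInv_pairVec {a : ℤ} {c : ℕ} (hc : c ∣ N) (h : IsCoprime a (c : ℤ)) :
    cInv N (pairVec a c h) = c := by
  simp only [cInv, pairVec]
  simp only [Matrix.cons_val_one, Matrix.head_cons, Matrix.cons_val_zero]
  rw [Int.gcd_natCast_natCast]
  exact Nat.gcd_eq_left hc

lemma xInt_pairVec {a : ℤ} {c : ℕ} (hc : c ∣ N) (hc0 : c ≠ 0) (h : IsCoprime a (c : ℤ)) :
    xInt N (pairVec a c h) = a := by
  unfold xInt
  rw [cInv_pairVec hc h]
  simp only [pairVec, Matrix.cons_val_one, Matrix.head_cons, Matrix.cons_val_zero]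
  rw [Int.ediv_self (by exact_mod_cast hc0), mul_one]

/-- Every primitive vector is equivalent to a standard pair `(a, c)`. -/
lemma exists_rel_pair (hN : N ≠ 0) (v : PrimVec) :
    ∃ (a : ℤ) (h : IsCoprime a ((cInv N v : ℕ) : ℤ)), cuspRel N v (pairVec a (cInv N v) h) := by
  obtain ⟨r, s, hrs⟩ := v.2
  set c : ℕ := cInv N v with hcdef
  set m : ℕ := N / c with hmdef
  set p : ℤ := v.1 0 with hpdef
  set q : ℤ := v.1 1 with hqdef
  have hc0 : c ≠ 0 := cInv_ne_zero hN v
  have hcq : ((c : ℕ) : ℤ) ∣ q := cInv_dvd_q v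
  set q₁ : ℤ := q / (c : ℤ) with hq₁def
  have hq1 : q = (c : ℤ) * q₁ := (Int.mul_ediv_cancel' hcq).symm
  have hNc : (N : ℤ) = (c : ℤ) * (m : ℤ) := by exact_mod_cast (Nat.mul_div_cancel' (cInv_dvd v)).symm
  obtain ⟨u, uv, hu⟩ := coprime_q1 hN v
  -- `hu : u * q₁ + uv * m = 1`
  have hrq : IsCoprime r q := ⟨p, s, by linear_combination hrs⟩
  have hgcddvd : ((Nat.gcd m c : ℕ) : ℤ) ∣ q :=
    dvd_trans (Int.natCast_dvd_natCast.mpr (Nat.gcd_dvd_right m c)) hcq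
  have hrg : IsCoprime r ((Nat.gcd m c : ℕ) : ℤ) := hrq.of_isCoprime_of_dvd_right hgcddvd
  have hug : IsCoprime u ((Nat.gcd m c : ℕ) : ℤ) :=
    IsCoprime.of_isCoprime_of_dvd_right (⟨q₁, uv, by linear_combination hu⟩ : IsCoprime u (m : ℤ))
      (Int.natCast_dvd_natCast.mpr (Nat.gcd_dvd_left m c))
  obtain ⟨y, hym, hyc⟩ := exists_coprime_shift m c hc0 (r * u) (hrg.mul_left hug)
  obtain ⟨t, ht⟩ := hym
  obtain ⟨a, b, hab⟩ := hyc
  refine ⟨a, ⟨y, b, by linear_combination hab⟩, ?_⟩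
  have hmr : r - y * q₁ = (m : ℤ) * (r * uv - t * q₁) := by
    linear_combination (-q₁) * ht - r * hu
  have hdet : (!![a * r + b * q, a * s - b * p; (c : ℤ) * r - y * q, (c : ℤ) * s + y * p]).det
      = 1 := by
    rw [Matrix.det_fin_two_of]
    linear_combination (a * y + b * (c : ℤ)) * hrs + hab
  refine ⟨⟨_, hdet⟩, ?_, 1, ?_⟩
  · apply CongruenceSubgroup.Gamma0_mem.mpr
    show (((!![a * r + b * q, a * s - b * p;
        (c : ℤ) * r - y * q, (c : ℤ) * s + y * p]) 1 0 : ℤ) : ZMod N) = 0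
    have hdvd : (N : ℤ) ∣ (c : ℤ) * r - y * q := by
      refine ⟨r * uv - t * q₁, ?_⟩
      rw [hNc]
      linear_combination (c : ℤ) * hmr - y * hq1
    have hent : (!![a * r + b * q, a * s - b * p;
        (c : ℤ) * r - y * q, (c : ℤ) * s + y * p]) 1 0 = (c : ℤ) * r - y * q := by simp
    rw [hent]
    exact_mod_cast (ZMod.intCast_zmod_eq_zero_iff_dvd _ _).mpr hdvd
  · funext i
    fin_cases i
    · show (!![a * r + b * q, a * s - b * p;
        (c : ℤ) * r - y * q, (c : ℤ) * s + y * p]).mulVec v.1 0 = (1 : ℤ) • (![a, (c : ℤ)]) 0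
      simp [Matrix.mulVec, dotProduct, Fin.sum_univ_two]
      linear_combination a * hrs
    · show (!![a * r + b * q, a * s - b * p;
        (c : ℤ) * r - y * q, (c : ℤ) * s + y * p]).mulVec v.1 1 = (1 : ℤ) • (![a, (c : ℤ)]) 1
      simp [Matrix.mulVec, dotProduct, Fin.sum_univ_two]
      linear_combination (c : ℤ) * hrs

/-- Two standard pairs with congruent numerators are equivalent. -/
lemma pair_rel_pair (hN : N ≠ 0) {c : ℕ} (hc : c ∣ N) (hc0 : c ≠ 0) {a a' : ℤ}
    (h : IsCoprime a (c : ℤ)) (h' : IsCoprime a' (c : ℤ))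
    (hd : ((dd N c : ℕ) : ℤ) ∣ a' - a) :
    cuspRel N (pairVec a c h) (pairVec a' c h') := by
  set m : ℕ := N / c with hm
  have hNc : (N : ℤ) = (c : ℤ) * (m : ℤ) := by exact_mod_cast (Nat.mul_div_cancel' hc).symm
  set X : ℤ := Nat.gcdA c m with hX
  set Y : ℤ := Nat.gcdB c m with hY
  have hXY : ((dd N c : ℕ) : ℤ) = (c : ℤ) * X + (m : ℤ) * Y := Nat.gcd_eq_gcd_ab c m
  obtain ⟨w, vv, hwv⟩ := h.mul_left h'
  obtain ⟨e, he⟩ := hd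
  set γ₀ : ℤ := Y * e * w with hγ₀
  set α : ℤ := 1 + (m : ℤ) * γ₀ * a' with hα
  set δ : ℤ := 1 - (m : ℤ) * γ₀ * a with hδ
  set β : ℤ := X * e + vv * e * (((dd N c : ℕ) : ℤ) - (c : ℤ) * X) with hβ
  have hstar : a' - a - (m : ℤ) * γ₀ * a * a' = (c : ℤ) * β := by
    rw [hγ₀, hβ]
    linear_combination he - e * (((dd N c : ℕ) : ℤ) - (c : ℤ) * X) * hwv + e * w * a * a' * hXY
  have hdet : (!![α, β; (N : ℤ) * γ₀, δ]).det = 1 := by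
    rw [Matrix.det_fin_two_of, hα, hδ]
    linear_combination ((m : ℤ) * γ₀) * hstar - β * γ₀ * hNc
  refine ⟨⟨!![α, β; (N : ℤ) * γ₀, δ], hdet⟩, ?_, 1, ?_⟩
  · apply CongruenceSubgroup.Gamma0_mem.mpr
    show (((!![α, β; (N : ℤ) * γ₀, δ]) 1 0 : ℤ) : ZMod N) = 0
    simp
  · funext i
    fin_cases i
    · show (!![α, β; (N : ℤ) * γ₀, δ]).mulVec ![a, (c : ℤ)] 0 = (1 : ℤ) • (![a', (c : ℤ)]) 0
      simp [Matrix.mulVec, dotProduct, Fin.sum_univ_two]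
      linear_combination -hstar
    · show (!![α, β; (N : ℤ) * γ₀, δ]).mulVec ![a, (c : ℤ)] 1 = (1 : ℤ) • (![a', (c : ℤ)]) 1
      simp [Matrix.mulVec, dotProduct, Fin.sum_univ_two]
      linear_combination γ₀ * a * hNc

/-! ### Bijectivity -/

lemma fMap_injective (hN : N ≠ 0) {v w : PrimVec} (h : fMap N hN v = fMap N hN w) :
    cuspRel N v w := by
  unfold fMap at h
  obtain ⟨hc', hx⟩ := cuspData_eq_elim h (IsUnit.unit_spec _).symm (IsUnit.unit_spec _).symm
  have hc : cInv N v = cInv N w := hc'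
  obtain ⟨a, ha, hva⟩ := exists_rel_pair hN v
  obtain ⟨a', ha', hwa'⟩ := exists_rel_pair hN w
  have hc0 : cInv N v ≠ 0 := cInv_ne_zero hN v
  have ha'' : IsCoprime a' ((cInv N v : ℕ) : ℤ) := by rw [hc]; exact ha'
  have hpe : pairVec a' (cInv N w) ha' = pairVec a' (cInv N v) ha'' := by
    apply Subtype.ext
    show ![a', ((cInv N w : ℕ) : ℤ)] = ![a', ((cInv N v : ℕ) : ℤ)]
    rw [hc]
  -- congruences
  have h1 : a ≡ xInt N v [ZMOD ((dd N (cInv N v) : ℕ) : ℤ)] := by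
    have h2 := (rel_invariants hN hva).2
    rw [xInt_pairVec (cInv_dvd v) hc0 ha] at h2
    exact (ZMod.intCast_eq_intCast_iff _ _ _).mp h2
  have h2 : a' ≡ xInt N w [ZMOD ((dd N (cInv N w) : ℕ) : ℤ)] := by
    have h3 := (rel_invariants hN hwa').2
    rw [xInt_pairVec (cInv_dvd w) (cInv_ne_zero hN w) ha'] at h3
    exact (ZMod.intCast_eq_intCast_iff _ _ _).mp h3
  rw [← hc] at h2
  have h3 : xInt N v ≡ xInt N w [ZMOD ((dd N (cInv N v) : ℕ) : ℤ)] :=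
    (ZMod.intCast_eq_intCast_iff _ _ _).mp hx
  have h4 : a ≡ a' [ZMOD ((dd N (cInv N v) : ℕ) : ℤ)] := (h1.trans h3).trans h2.symm
  have h5 : ((dd N (cInv N v) : ℕ) : ℤ) ∣ a' - a := Int.ModEq.dvd h4
  exact cuspRel_trans hva
    (cuspRel_trans (pair_rel_pair hN (cInv_dvd v) hc0 ha ha'' h5)
      (cuspRel_symm (hpe ▸ hwa')))

lemma fMap_surjective (hN : N ≠ 0) (t : CuspData N) : ∃ v : PrimVec, fMap N hN v = t := by
  obtain ⟨⟨c, hcmem⟩, x⟩ := t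
  obtain ⟨hc, -⟩ := Nat.mem_divisors.mp hcmem
  have hc0 : c ≠ 0 := (Nat.pos_of_mem_divisors hcmem).ne'
  haveI : NeZero (dd N c) := ⟨dd_ne_zero hN hc hc0⟩
  set y₀ : ℕ := ((x : ZMod (dd N c)).val) with hy₀def
  have hy₀ : Nat.Coprime y₀ (dd N c) := ZMod.val_coe_unit_coprime x
  have hy₀' : IsCoprime ((y₀ : ℕ) : ℤ) ((Nat.gcd (dd N c) c : ℕ) : ℤ) := by
    rw [Nat.gcd_eq_left (dd_dvd_left c)]
    rw [Int.isCoprime_iff_gcd_eq_one]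
    exact_mod_cast hy₀
  obtain ⟨a, had, hac⟩ := exists_coprime_shift (dd N c) c hc0 (y₀ : ℤ) hy₀'
  refine ⟨pairVec a c hac, ?_⟩
  unfold fMap
  have hxa : xInt N (pairVec a c hac) = a := xInt_pairVec hc hc0 hac
  refine cuspData_ext (cInv_pairVec hc hac) a ?_ ?_
  · rw [IsUnit.unit_spec, hxa]
  · -- (a : ZMod (dd N c)) = x
    have h6 : ((y₀ : ℤ) : ZMod (dd N c)) = ((a : ℤ) : ZMod (dd N c)) :=
      (ZMod.intCast_eq_intCast_iff _ _ _).mpr (Int.modEq_iff_dvd.mpr had)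
    rw [← h6]
    push_cast
    exact ZMod.natCast_rightInverse _

end CuspCount

open CuspCount in
/-- The number of `Γ₀(N)`-inequivalent cusps equals
`∑_{e ∣ N} φ(gcd(e, N/e))`. -/
theorem card_cusps_Gamma0 (N : ℕ) (hN : 0 < N) :
    Nat.card (Quot (cuspRel N)) =
      ∑ e ∈ N.divisors, (Nat.gcd e (N / e)).totient := by
  have hN' : N ≠ 0 := hN.ne'
  -- the descended map
  have key : Nat.card (Quot (cuspRel N)) = Nat.card (CuspData N) := by
    apply Nat.card_eq_of_bijective (Quot.lift (fMap N hN') (fun v w h => fMap_rel hN' h))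
    constructor
    · refine Quot.ind (fun v => Quot.ind (fun w h => ?_))
      exact Quot.sound (fMap_injective hN' h)
    · intro t
      obtain ⟨v, hv⟩ := fMap_surjective hN' t
      exact ⟨Quot.mk _ v, hv⟩
  rw [key]
  haveI inst1 : ∀ e : {e : ℕ // e ∈ N.divisors}, NeZero (dd N e.1) := fun e =>
    ⟨dd_ne_zero hN' (Nat.mem_divisors.mp e.2).1 (Nat.pos_of_mem_divisors e.2).ne'⟩
  haveI inst2 : Fintype (CuspData N) := by
    unfold CuspData
    infer_instance
  rw [Nat.card_eq_fintype_card]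
  have h7 : Fintype.card (CuspData N)
      = ∑ e : {e : ℕ // e ∈ N.divisors}, Fintype.card ((ZMod (dd N e.1))ˣ) := by
    convert (Fintype.card_sigma (α := fun e : {e : ℕ // e ∈ N.divisors} => (ZMod (dd N e.1))ˣ))
    rfl
  rw [h7]
  have h8 : ∀ e : {e : ℕ // e ∈ N.divisors},
      Fintype.card ((ZMod (dd N e.1))ˣ) = (Nat.gcd e.1 (N / e.1)).totient := fun e =>
    ZMod.card_units_eq_totient (dd N e.1)
  rw [Finset.sum_congr rfl (fun e _ => h8 e)]
  exact Finset.sum_coe_sort N.divisors (fun e => (Nat.gcd e (N / e)).totient)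
end

section
/- Euler–Jacobi identity: η(τ)³ = ∑_{n > 0} (−4/n) · n · q^{n²/8}, where (−4/n) is the Kronecker symbol and q = e^{2πiτ}. -/
open Complex

/-- The Dedekind eta function `η(τ) = q^{1/24} ∏_{n ≥ 1} (1 − qⁿ)`, `q = e^{2πiτ}`. -/
noncomputable def dedekindEta (τ : ℂ) : ℂ :=
  Complex.exp (Real.pi * Complex.I * τ / 12) *
    ∏' n : ℕ, (1 - Complex.exp (2 * Real.pi * Complex.I * τ) ^ (n + 1))

/-- The Kronecker symbol `(−4/n)`: `1` if `n ≡ 1 mod 4`, `−1` if `n ≡ 3 mod 4`,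
`0` if `n` is even. -/
def kronNeg4 (n : ℤ) : ℤ :=
  if n % 4 = 1 then 1 else if n % 4 = 3 then -1 else 0

open Finset Filter Topology

noncomputable def gbZ (q : ℂ) : ℕ → ℤ → ℂ
  | 0, k => if k = 0 then 1 else 0
  | (N+1), k => gbZ q N k + q ^ ((N : ℤ) + 1 - k) * gbZ q N (k - 1)

lemma gbZ_of_neg (q : ℂ) : ∀ (N : ℕ) {k : ℤ}, k < 0 → gbZ q N k = 0 := by
  intro N
  induction N with
  | zero => intro k hk; simp [gbZ]; omega
  | succ N ih => intro k hk; simp [gbZ, ih hk, ih (by omega : k - 1 < 0)]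

lemma gbZ_of_gt (q : ℂ) : ∀ (N : ℕ) {k : ℤ}, (N : ℤ) < k → gbZ q N k = 0 := by
  intro N
  induction N with
  | zero => intro k hk; simp [gbZ]; omega
  | succ N ih =>
    intro k hk
    simp [gbZ, ih (by push_cast at hk ⊢; omega : (N:ℤ) < k),
      ih (by push_cast at hk ⊢; omega : (N:ℤ) < k - 1)]

lemma gbZ_zero (q : ℂ) (N : ℕ) : gbZ q N 0 = 1 := by
  induction N with
  | zero => simp [gbZ]
  | succ N ih => simp [gbZ, ih, gbZ_of_neg q N (by omega : (-1 : ℤ) < 0)]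

lemma gbZ_self (q : ℂ) (N : ℕ) : gbZ q N N = 1 := by
  induction N with
  | zero => simp [gbZ]
  | succ N ih =>
    have h1 : gbZ q N ((N:ℤ)+1) = 0 := gbZ_of_gt q N (by omega)
    simp [gbZ, h1, ih]

lemma gbZ_pascal1 (q : ℂ) (N : ℕ) (k : ℤ) :
    gbZ q (N+1) k = gbZ q N k + q ^ ((N : ℤ) + 1 - k) * gbZ q N (k - 1) := rfl

lemma gbZ_pascal2 {q : ℂ} (hq : q ≠ 0) :
    ∀ (N : ℕ) (k : ℤ), gbZ q (N+1) k = q ^ k * gbZ q N k + gbZ q N (k - 1) := by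
  intro N
  induction N with
  | zero =>
    intro k
    rw [gbZ_pascal1]
    rcases eq_or_ne k 0 with rfl | h0
    · simp [gbZ]
    rcases eq_or_ne k 1 with rfl | h1
    · simp [gbZ]
    · simp [gbZ, h0, h1, show k - 1 ≠ 0 by omega]
  | succ N ih =>
    intro k
    have hc : ((N + 1 : ℕ) : ℤ) = (N : ℤ) + 1 := by push_cast; ring
    rw [gbZ_pascal1 q (N+1) k, hc]
    conv_rhs => rw [gbZ_pascal1 q N k, gbZ_pascal1 q N (k-1)]
    rw [ih k, ih (k-1)]
    have e1 : q ^ ((N:ℤ)+1+1-k) * (q ^ (k-1) * gbZ q N (k-1))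
        = q ^ ((N:ℤ)+1) * gbZ q N (k-1) := by
      rw [← mul_assoc, ← zpow_add₀ hq]; ring_nf
    have e2 : q ^ k * (q ^ ((N:ℤ)+1-k) * gbZ q N (k-1))
        = q ^ ((N:ℤ)+1) * gbZ q N (k-1) := by
      rw [← mul_assoc, ← zpow_add₀ hq]; ring_nf
    rw [mul_add, mul_add, e1, e2, show (N:ℤ)+1-(k-1) = (N:ℤ)+1+1-k by ring]
    ring

lemma gbZ_three {q : ℂ} (hq : q ≠ 0) (N : ℕ) (k : ℤ) :
    gbZ q (N+2) k = q ^ k * gbZ q N k + (1 + q ^ ((N:ℤ)+1)) * gbZ q N (k-1)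
      + q ^ ((N:ℤ)+2-k) * gbZ q N (k-2) := by
  have hc : ((N + 1 : ℕ) : ℤ) = (N : ℤ) + 1 := by push_cast; ring
  rw [show N+2 = (N+1)+1 from rfl, gbZ_pascal1 q (N+1) k, hc,
    gbZ_pascal2 hq N k, gbZ_pascal2 hq N (k-1)]
  have e1 : q ^ ((N:ℤ)+1+1-k) * (q ^ (k-1) * gbZ q N (k-1))
      = q ^ ((N:ℤ)+1) * gbZ q N (k-1) := by
    rw [← mul_assoc, ← zpow_add₀ hq]; ring_nf
  rw [mul_add, e1, show k - 1 - 1 = k - 2 by ring, show (N:ℤ)+1+1-k = (N:ℤ)+2-k by ring]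
  ring

noncomputable def Aprod (q : ℂ) (m : ℕ) : ℂ := ∏ i ∈ Finset.range m, (1 - q ^ (i+1))

lemma Aprod_succ (q : ℂ) (m : ℕ) : Aprod q (m+1) = Aprod q m * (1 - q ^ (m+1)) :=
  Finset.prod_range_succ _ m

lemma gbZ_closed {q : ℂ} (hq : q ≠ 0) :
    ∀ a b : ℕ, gbZ q (a+b) (a : ℤ) * (Aprod q a * Aprod q b) = Aprod q (a+b) := by
  intro a
  induction a with
  | zero => intro b; simp [gbZ_zero, Aprod]
  | succ a ihA =>
    intro b
    induction b with
    | zero =>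
      have : gbZ q (a+1) ((a:ℤ)+1) = 1 := by
        have := gbZ_self q (a+1); push_cast at this; exact this
      simp only [Nat.add_zero]
      push_cast
      rw [this]
      simp [Aprod]
    | succ b ihB =>
      push_cast
      rw [show a+1+(b+1) = (a+1+b)+1 from by ring, gbZ_pascal1 q (a+1+b) ((a:ℤ)+1),
        show ((a+1+b : ℕ) : ℤ) + 1 - ((a:ℤ)+1) = ((b+1 : ℕ) : ℤ) from by push_cast; ring,
        zpow_natCast, show (a:ℤ) + 1 - 1 = ((a:ℤ)) from by ring]
      push_cast at ihB
      have ihA' := ihA (b+1)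
      rw [show a+(b+1) = a+1+b from by ring] at ihA'
      rw [Aprod_succ q b, Aprod_succ q a, Aprod_succ q (a+1+b)] at *
      linear_combination (1-q^(b+1)) * ihB + q^(b+1) * (1-q^(a+1)) * ihA'

def eT (j : ℤ) : ℤ := j * (j + 1) / 2

lemma two_eT (j : ℤ) : 2 * eT j = j * (j + 1) :=
  Int.mul_ediv_cancel' (Int.even_mul_succ_self j).two_dvd

lemma eT_nonneg (j : ℤ) : 0 ≤ eT j := by
  have h : 0 ≤ j * (j + 1) := by rcases le_or_gt 0 j with h | h; positivity; nlinarith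
  exact Int.ediv_nonneg h (by norm_num)

lemma eT_succ (j : ℤ) : eT (j + 1) = eT j + (j + 1) :=
  mul_left_cancel₀ (two_ne_zero) (by rw [mul_add, two_eT, two_eT]; ring)

lemma eT_pred (j : ℤ) : eT (j - 1) = eT j - j :=
  mul_left_cancel₀ (two_ne_zero) (by rw [mul_sub, two_eT, two_eT]; ring)

lemma eT_ge (j : ℤ) (h : 0 ≤ j) : j ≤ eT j := by
  have h2 := two_eT j
  rcases eq_or_lt_of_le h with rfl | h1
  · simp [eT]
  · nlinarith [mul_le_mul_of_nonneg_right (by omega : (1:ℤ) ≤ j) (le_of_lt h1)]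

lemma eT_neg (j : ℤ) : eT (-(j+1)) = eT j :=
  mul_left_cancel₀ (two_ne_zero) (by rw [two_eT, two_eT]; ring)

noncomputable def mterm (q : ℂ) (n : ℕ) (j : ℤ) : ℂ :=
  (-1:ℂ)^j * gbZ q (2*n) ((n:ℤ)+j) * q^(eT j)

noncomputable def term (q : ℂ) (n : ℕ) (j : ℤ) : ℂ := (j:ℂ) * mterm q n j

lemma mterm_eq_zero (q : ℂ) (n : ℕ) {j : ℤ} (h : j ∉ Finset.Icc (-(n:ℤ)) (n:ℤ)) :
    mterm q n j = 0 := by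
  simp only [Finset.mem_Icc, not_and_or, not_le] at h
  unfold mterm
  rcases h with h | h
  · rw [gbZ_of_neg q (2*n) (by omega)]; ring
  · rw [gbZ_of_gt q (2*n) (by push_cast; omega)]; ring

lemma term_eq_zero (q : ℂ) (n : ℕ) {j : ℤ} (h : j ∉ Finset.Icc (-(n:ℤ)) (n:ℤ)) :
    term q n j = 0 := by rw [term, mterm_eq_zero q n h]; ring

lemma summable_mterm (q : ℂ) (n : ℕ) : Summable (mterm q n) :=
  summable_of_ne_finset_zero (fun _ h => mterm_eq_zero q n h)

lemma summable_term (q : ℂ) (n : ℕ) : Summable (term q n) :=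
  summable_of_ne_finset_zero (fun _ h => term_eq_zero q n h)

noncomputable def Msum (q : ℂ) (n : ℕ) : ℂ := ∑' j : ℤ, mterm q n j
noncomputable def Lsum (q : ℂ) (n : ℕ) : ℂ := ∑' j : ℤ, term q n j

lemma Msum_zero (q : ℂ) : Msum q 0 = 1 := by
  rw [Msum, tsum_eq_single 0]
  · simp [mterm, gbZ_zero, eT]
  · intro j hj
    rcases lt_or_ge (0:ℤ) j with h | h
    · rw [mterm, gbZ_of_gt q 0 (by omega)]; ring
    · rw [mterm, gbZ_of_neg q 0 (by omega)]; ring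

lemma Lsum_zero (q : ℂ) : Lsum q 0 = 0 := by
  rw [Lsum]
  convert tsum_zero with j
  rcases eq_or_ne j 0 with rfl | hj
  · simp [term]
  rcases lt_or_ge (0:ℤ) j with h | h
  · rw [term, mterm, gbZ_of_gt q 0 (by omega)]; ring
  · rw [term, mterm, gbZ_of_neg q 0 (by omega)]; ring

noncomputable def tt1 (q : ℂ) (n : ℕ) (j : ℤ) : ℂ :=
  (-1:ℂ)^j * q^(eT j + (n:ℤ) + 1 + j) * gbZ q (2*n) ((n:ℤ) + (j+1))

noncomputable def tt3 (q : ℂ) (n : ℕ) (j : ℤ) : ℂ :=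
  (-1:ℂ)^j * q^(eT j + (n:ℤ) + 1 - j) * gbZ q (2*n) ((n:ℤ) + (j-1))

lemma tt1_eq_zero (q : ℂ) (n : ℕ) {j : ℤ} (h : j ∉ Finset.Icc (-(n:ℤ)-1) ((n:ℤ)+1)) :
    tt1 q n j = 0 := by
  simp only [Finset.mem_Icc, not_and_or, not_le] at h
  unfold tt1
  rcases h with h | h
  · rw [gbZ_of_neg q (2*n) (by omega)]; ring
  · rw [gbZ_of_gt q (2*n) (by push_cast; omega)]; ring

lemma tt3_eq_zero (q : ℂ) (n : ℕ) {j : ℤ} (h : j ∉ Finset.Icc (-(n:ℤ)-1) ((n:ℤ)+1)) :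
    tt3 q n j = 0 := by
  simp only [Finset.mem_Icc, not_and_or, not_le] at h
  unfold tt3
  rcases h with h | h
  · rw [gbZ_of_neg q (2*n) (by omega)]; ring
  · rw [gbZ_of_gt q (2*n) (by push_cast; omega)]; ring

lemma summable_tt1 (q : ℂ) (n : ℕ) : Summable (tt1 q n) :=
  summable_of_ne_finset_zero (fun _ h => tt1_eq_zero q n h)

lemma summable_tt3 (q : ℂ) (n : ℕ) : Summable (tt3 q n) :=
  summable_of_ne_finset_zero (fun _ h => tt3_eq_zero q n h)

lemma neg_one_zpow_sub_one (j : ℤ) : (-1:ℂ)^(j-1) = -(-1:ℂ)^j := by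
  rw [zpow_sub₀ (by norm_num : (-1:ℂ) ≠ 0), zpow_one, div_neg, div_one]

lemma neg_one_zpow_add_one (j : ℤ) : (-1:ℂ)^(j+1) = -(-1:ℂ)^j := by
  rw [zpow_add₀ (by norm_num : (-1:ℂ) ≠ 0)]
  norm_num

lemma mterm_succ {q : ℂ} (hq : q ≠ 0) (n : ℕ) (j : ℤ) :
    mterm q (n+1) j = tt1 q n j + (1 + q^(2*(n:ℤ)+1)) * mterm q n j + tt3 q n j := by
  unfold mterm tt1 tt3
  have harg : ((n+1:ℕ):ℤ) + j = (n:ℤ) + 1 + j := by push_cast; ring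
  rw [show 2*(n+1) = 2*n + 2 from by ring, harg, gbZ_three hq (2*n) ((n:ℤ)+1+j),
    show (n:ℤ)+1+j-1 = (n:ℤ)+j from by ring,
    show (n:ℤ)+1+j-2 = (n:ℤ)+(j-1) from by ring,
    show ((2*n:ℕ):ℤ)+1 = 2*(n:ℤ)+1 from by push_cast; ring,
    show ((2*n:ℕ):ℤ)+2-((n:ℤ)+1+j) = (n:ℤ)+1-j from by push_cast; ring,
    show (n:ℤ)+1+j = (n:ℤ)+(j+1) from by ring]
  simp only [zpow_add₀ hq, zpow_sub₀ hq, zpow_one]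
  field_simp

lemma tt1_shift {q : ℂ} (hq : q ≠ 0) (n : ℕ) (j : ℤ) :
    tt1 q n (j-1) = -q^((n:ℤ)) * mterm q n j := by
  unfold tt1 mterm
  rw [show j - 1 + 1 = j from by ring, eT_pred, neg_one_zpow_sub_one,
    show eT j - j + (n:ℤ) + 1 + (j-1) = eT j + (n:ℤ) from by ring,
    zpow_add₀ hq]
  ring

lemma tt3_shift {q : ℂ} (hq : q ≠ 0) (n : ℕ) (j : ℤ) :
    tt3 q n (j+1) = -q^((n:ℤ)+1) * mterm q n j := by
  unfold tt3 mterm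
  rw [show j + 1 - 1 = j from by ring, eT_succ, neg_one_zpow_add_one,
    show eT j + (j+1) + (n:ℤ) + 1 - (j+1) = eT j + ((n:ℤ)+1) from by ring,
    zpow_add₀ hq]
  ring

lemma tsum_tt1 {q : ℂ} (hq : q ≠ 0) (n : ℕ) :
    ∑' j : ℤ, tt1 q n j = -q^((n:ℤ)) * Msum q n := by
  rw [← (Equiv.subRight (1:ℤ)).tsum_eq (tt1 q n)]
  simp only [Equiv.subRight_apply]
  rw [tsum_congr (fun j => tt1_shift hq n j), tsum_mul_left, Msum]

lemma tsum_tt3 {q : ℂ} (hq : q ≠ 0) (n : ℕ) :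
    ∑' j : ℤ, tt3 q n j = -q^((n:ℤ)+1) * Msum q n := by
  rw [← (Equiv.addRight (1:ℤ)).tsum_eq (tt3 q n)]
  simp only [Equiv.coe_addRight]
  rw [tsum_congr (fun j => tt3_shift hq n j), tsum_mul_left, Msum]

lemma Msum_succ {q : ℂ} (hq : q ≠ 0) (n : ℕ) :
    Msum q (n+1) = (1 - q^((n:ℤ))) * (1 - q^((n:ℤ)+1)) * Msum q n := by
  rw [Msum, tsum_congr (fun j => mterm_succ hq n j),
    Summable.tsum_add ((summable_tt1 q n).add ((summable_mterm q n).mul_left _)) (summable_tt3 q n),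
    Summable.tsum_add (summable_tt1 q n) ((summable_mterm q n).mul_left _),
    tsum_tt1 hq n, tsum_tt3 hq n, tsum_mul_left, ← Msum,
    show 2*(n:ℤ)+1 = (n:ℤ) + ((n:ℤ)+1) from by ring, zpow_add₀ hq]
  ring

lemma Lsum_succ {q : ℂ} (hq : q ≠ 0) (n : ℕ) :
    Lsum q (n+1) = (1 - q^((n:ℤ))) * (1 - q^((n:ℤ)+1)) * Lsum q n
      + (q^((n:ℤ)) - q^((n:ℤ)+1)) * Msum q n := by
  have hdec : ∀ j : ℤ, term q (n+1) j
      = (j:ℂ) * tt1 q n j + (1 + q^(2*(n:ℤ)+1)) * term q n j + (j:ℂ) * tt3 q n j := by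
    intro j
    rw [term, mterm_succ hq n j, term]
    ring
  have s1 : Summable (fun j : ℤ => (j:ℂ) * tt1 q n j) :=
    summable_of_ne_finset_zero (s := Finset.Icc (-(n:ℤ)-1) ((n:ℤ)+1))
      (fun j h => by rw [tt1_eq_zero q n h]; ring)
  have s3 : Summable (fun j : ℤ => (j:ℂ) * tt3 q n j) :=
    summable_of_ne_finset_zero (s := Finset.Icc (-(n:ℤ)-1) ((n:ℤ)+1))
      (fun j h => by rw [tt3_eq_zero q n h]; ring)
  have h1 : ∑' j : ℤ, (j:ℂ) * tt1 q n j
      = -q^((n:ℤ)) * (Lsum q n - Msum q n) := by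
    rw [← (Equiv.subRight (1:ℤ)).tsum_eq (fun j => (j:ℂ) * tt1 q n j)]
    simp only [Equiv.subRight_apply]
    have : ∀ j : ℤ, ((j - 1 : ℤ):ℂ) * tt1 q n (j-1)
        = -q^((n:ℤ)) * (term q n j - mterm q n j) := by
      intro j
      rw [tt1_shift hq n j, term]
      push_cast
      ring
    rw [tsum_congr this, tsum_mul_left,
      Summable.tsum_sub (summable_term q n) (summable_mterm q n), ← Lsum, ← Msum]
  have h3 : ∑' j : ℤ, (j:ℂ) * tt3 q n j
      = -q^((n:ℤ)+1) * (Lsum q n + Msum q n) := by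
    rw [← (Equiv.addRight (1:ℤ)).tsum_eq (fun j => (j:ℂ) * tt3 q n j)]
    simp only [Equiv.coe_addRight]
    have : ∀ j : ℤ, ((j + 1 : ℤ):ℂ) * tt3 q n (j+1)
        = -q^((n:ℤ)+1) * (term q n j + mterm q n j) := by
      intro j
      rw [tt3_shift hq n j, term]
      push_cast
      ring
    rw [tsum_congr this, tsum_mul_left,
      Summable.tsum_add (summable_term q n) (summable_mterm q n), ← Lsum, ← Msum]
  rw [Lsum, tsum_congr hdec,
    Summable.tsum_add (s1.add ((summable_term q n).mul_left _)) s3,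
    Summable.tsum_add s1 ((summable_term q n).mul_left _),
    h1, h3, tsum_mul_left, ← Lsum,
    show 2*(n:ℤ)+1 = (n:ℤ) + ((n:ℤ)+1) from by ring, zpow_add₀ hq]
  ring

lemma Msum_eq_zero {q : ℂ} (hq : q ≠ 0) (n : ℕ) : Msum q (n+1) = 0 := by
  induction n with
  | zero => rw [Msum_succ hq 0]; simp
  | succ n ih => rw [Msum_succ hq (n+1), ih]; ring

lemma Lsum_eq {q : ℂ} (hq : q ≠ 0) (n : ℕ) :
    Lsum q (n+1) = Aprod q (n+1) * Aprod q n := by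
  induction n with
  | zero =>
    rw [Lsum_succ hq 0, Lsum_zero, Msum_zero]
    simp [Aprod]
  | succ n ih =>
    rw [Lsum_succ hq (n+1), ih, Msum_eq_zero hq n, Aprod_succ q (n+1), Aprod_succ q n]
    rw [show ((n+1:ℕ):ℤ)+1 = ((n+2:ℕ):ℤ) from by push_cast; ring, zpow_natCast, zpow_natCast]
    ring

section Analytic

variable {q : ℂ}

lemma one_sub_pow_ne (hq1 : ‖q‖ < 1) (i : ℕ) : 1 - q^(i+1) ≠ 0 := by
  intro h
  have h2 : q^(i+1) = 1 := by linear_combination -h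
  have h3 : ‖q^(i+1)‖ < 1 := by
    rw [norm_pow]
    exact pow_lt_one₀ (norm_nonneg q) hq1 (by omega)
  rw [h2] at h3; simp at h3

lemma summable_r_pow (hq1 : ‖q‖ < 1) : Summable (fun i : ℕ => ‖q‖^(i+1)) := by
  simpa [pow_succ] using (summable_geometric_of_lt_one (norm_nonneg q) hq1).mul_right ‖q‖

lemma summable_log_one_sub (hq1 : ‖q‖ < 1) :
    Summable (fun i : ℕ => Complex.log (1 - q^(i+1))) := by
  apply Summable.of_norm_bounded_eventually
    ((summable_r_pow hq1).mul_left (3/2))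
  rw [Nat.cofinite_eq_atTop]
  have h0 : Tendsto (fun i : ℕ => ‖q‖^i) atTop (𝓝 0) :=
    tendsto_pow_atTop_nhds_zero_of_lt_one (norm_nonneg q) hq1
  filter_upwards [h0.eventually (eventually_le_nhds one_half_pos)] with i hi
  have hle : ‖q‖^(i+1) ≤ 1/2 :=
    le_trans (pow_le_pow_of_le_one (norm_nonneg q) hq1.le (by omega)) hi
  have := Complex.norm_log_one_add_half_le_self (z := -(q^(i+1)))
    (by rwa [norm_neg, norm_pow])
  rw [show (1:ℂ) + -(q^(i+1)) = 1 - q^(i+1) by ring] at this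
  calc ‖Complex.log (1 - q^(i+1))‖ ≤ 3/2 * ‖-(q^(i+1))‖ := this
    _ = 3/2 * ‖q‖^(i+1) := by rw [norm_neg, norm_pow]

noncomputable def Pq (q : ℂ) : ℂ := ∏' n : ℕ, (1 - q^(n+1))

lemma multipliable_one_sub (hq1 : ‖q‖ < 1) : Multipliable (fun n : ℕ => 1 - q^(n+1)) :=
  Complex.multipliable_of_summable_log (summable_log_one_sub hq1)

lemma Pq_ne_zero (hq1 : ‖q‖ < 1) : Pq q ≠ 0 := by
  have := Complex.cexp_tsum_eq_tprod (f := fun n : ℕ => 1 - q^(n+1))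
    (fun n => one_sub_pow_ne hq1 n) (summable_log_one_sub hq1)
  rw [Pq, ← this]
  exact Complex.exp_ne_zero _

lemma tendsto_Aprod (hq1 : ‖q‖ < 1) : Tendsto (Aprod q) atTop (𝓝 (Pq q)) :=
  (multipliable_one_sub hq1).hasProd.tendsto_prod_nat

lemma Aprod_ne_zero (hq1 : ‖q‖ < 1) (m : ℕ) : Aprod q m ≠ 0 :=
  Finset.prod_ne_zero_iff.mpr (fun i _ => one_sub_pow_ne hq1 i)

lemma Aprod_le (hq1 : ‖q‖ < 1) (m : ℕ) :
    ‖Aprod q m‖ ≤ Real.exp (∑' i : ℕ, ‖q‖^(i+1)) := by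
  rw [Aprod, norm_prod]
  calc ∏ i ∈ Finset.range m, ‖1 - q^(i+1)‖
      ≤ ∏ i ∈ Finset.range m, Real.exp (‖q‖^(i+1)) := by
        apply Finset.prod_le_prod (fun i _ => norm_nonneg _)
        intro i _
        calc ‖1 - q^(i+1)‖ ≤ ‖(1:ℂ)‖ + ‖q^(i+1)‖ := norm_sub_le _ _
          _ = 1 + ‖q‖^(i+1) := by rw [norm_one, norm_pow]
          _ ≤ Real.exp (‖q‖^(i+1)) := by
              have := Real.add_one_le_exp (‖q‖^(i+1)); linarith
    _ = Real.exp (∑ i ∈ Finset.range m, ‖q‖^(i+1)) := (Real.exp_sum _ _).symm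
    _ ≤ Real.exp (∑' i : ℕ, ‖q‖^(i+1)) := by
        apply Real.exp_le_exp.mpr
        exact Summable.sum_le_tsum _ (fun i _ => by positivity) (summable_r_pow hq1)

lemma exists_Aprod_lb (hq1 : ‖q‖ < 1) :
    ∃ δ > 0, ∀ m, δ ≤ ‖Aprod q m‖ := by
  have hL : 0 < ‖Pq q‖ := norm_pos_iff.mpr (Pq_ne_zero hq1)
  have h := (tendsto_Aprod hq1).norm
  obtain ⟨N, hN⟩ := eventually_atTop.mp (h.eventually (eventually_ge_nhds (half_lt_self hL)))
  set s : Finset ℕ := Finset.range (N+1) with hs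
  have hsne : s.Nonempty := ⟨0, by simp [hs]⟩
  refine ⟨min (‖Pq q‖/2) (s.inf' hsne (fun m => ‖Aprod q m‖)), ?_, ?_⟩
  · apply lt_min (by linarith)
    rw [Finset.lt_inf'_iff]
    exact fun i _ => norm_pos_iff.mpr (Aprod_ne_zero hq1 i)
  · intro m
    rcases le_or_gt m N with hm | hm
    · exact le_trans (min_le_right _ _)
        (Finset.inf'_le _ (by simp [hs]; omega))
    · exact le_trans (min_le_left _ _) (hN m (by omega))

end Analytic

section Limits

variable {q : ℂ}

lemma gbZ_norm_le (hq0 : q ≠ 0) {δ C : ℝ} (hδ : 0 < δ)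
    (hlb : ∀ m, δ ≤ ‖Aprod q m‖) (hub : ∀ m, ‖Aprod q m‖ ≤ C) (N : ℕ) (k : ℤ) :
    ‖gbZ q N k‖ ≤ C / δ^2 := by
  have hδC : δ ≤ C := le_trans (hlb 0) (hub 0)
  have hC : 0 < C := lt_of_lt_of_le hδ hδC
  by_cases h : 0 ≤ k ∧ k ≤ (N:ℤ)
  · set a := k.toNat with ha
    have hak : (a:ℤ) = k := Int.toNat_of_nonneg h.1
    have hab : a + (N - a) = N := by omega
    have hcl := gbZ_closed hq0 a (N - a)
    rw [hab, hak] at hcl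
    have hAa : 0 < ‖Aprod q a‖ := lt_of_lt_of_le hδ (hlb a)
    have hAb : 0 < ‖Aprod q (N - a)‖ := lt_of_lt_of_le hδ (hlb (N - a))
    have ha0 : Aprod q a ≠ 0 := by intro h0; rw [h0, norm_zero] at hAa; exact lt_irrefl _ hAa
    have hb0 : Aprod q (N-a) ≠ 0 := by intro h0; rw [h0, norm_zero] at hAb; exact lt_irrefl _ hAb
    have hgb : gbZ q N k = Aprod q N / (Aprod q a * Aprod q (N - a)) := by
      rw [eq_div_iff (mul_ne_zero ha0 hb0)]
      exact hcl
    rw [hgb, norm_div, norm_mul, pow_two]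
    apply div_le_div₀ hC.le (hub N) (by positivity)
    exact mul_le_mul (hlb a) (hlb (N-a)) hδ.le (norm_nonneg _)
  · rcases not_and_or.mp h with h1 | h1
    · rw [gbZ_of_neg q N (by omega)]
      simp only [norm_zero]
      positivity
    · rw [gbZ_of_gt q N (by omega)]
      simp only [norm_zero]
      positivity

lemma tendsto_comp_Aprod (hq1 : ‖q‖ < 1) {g : ℕ → ℕ} (hg : Tendsto g atTop atTop) :
    Tendsto (fun n => Aprod q (g n)) atTop (𝓝 (Pq q)) :=
  (tendsto_Aprod hq1).comp hg

lemma tendsto_gbZ (hq0 : q ≠ 0) (hq1 : ‖q‖ < 1) (j : ℤ) :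
    Tendsto (fun n : ℕ => gbZ q (2*n) ((n:ℤ)+j)) atTop (𝓝 (Pq q)⁻¹) := by
  have hP := Pq_ne_zero hq1
  have h1 : Tendsto (fun n : ℕ => Aprod q (2*n)) atTop (𝓝 (Pq q)) :=
    tendsto_comp_Aprod hq1 (tendsto_atTop.mpr (fun b => eventually_atTop.mpr ⟨b, fun n hn => by omega⟩))
  have h2 : Tendsto (fun n : ℕ => Aprod q (((n:ℤ)+j).toNat)) atTop (𝓝 (Pq q)) :=
    tendsto_comp_Aprod hq1 (tendsto_atTop.mpr (fun b => eventually_atTop.mpr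
      ⟨b + j.natAbs, fun n hn => by omega⟩))
  have h3 : Tendsto (fun n : ℕ => Aprod q (((n:ℤ)-j).toNat)) atTop (𝓝 (Pq q)) :=
    tendsto_comp_Aprod hq1 (tendsto_atTop.mpr (fun b => eventually_atTop.mpr
      ⟨b + j.natAbs, fun n hn => by omega⟩))
  have hF : Tendsto (fun n : ℕ => Aprod q (2*n) *
      (Aprod q (((n:ℤ)+j).toNat) * Aprod q (((n:ℤ)-j).toNat))⁻¹) atTop
      (𝓝 (Pq q * (Pq q * Pq q)⁻¹)) :=
    h1.mul ((h2.mul h3).inv₀ (mul_ne_zero hP hP))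
  rw [show Pq q * (Pq q * Pq q)⁻¹ = (Pq q)⁻¹ by field_simp] at hF
  apply hF.congr'
  filter_upwards [eventually_atTop.mpr ⟨j.natAbs, fun n (hn : j.natAbs ≤ n) => hn⟩] with n hn
  set a := ((n:ℤ)+j).toNat with hadef
  set b := ((n:ℤ)-j).toNat with hbdef
  have hak : (a:ℤ) = (n:ℤ)+j := by omega
  have hab : a + b = 2*n := by omega
  have hcl := gbZ_closed hq0 a b
  rw [hab, hak] at hcl
  have ha0 : Aprod q a ≠ 0 := Aprod_ne_zero hq1 a
  have hb0 : Aprod q b ≠ 0 := Aprod_ne_zero hq1 b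
  field_simp
  linear_combination (-1 : ℂ)*hcl

lemma summable_aux (hq1 : ‖q‖ < 1) : Summable (fun n : ℕ => ((n:ℝ)+1) * ‖q‖^n) := by
  have h1 : Summable (fun n : ℕ => (n:ℝ) * ‖q‖^n) := by
    simpa using summable_pow_mul_geometric_of_norm_lt_one 1
      (r := ‖q‖) (by rwa [Real.norm_eq_abs, _root_.abs_of_nonneg (norm_nonneg q)])
  simpa [add_mul] using h1.add (summable_geometric_of_lt_one (norm_nonneg q) hq1)

lemma eT_toNat_ge (n : ℕ) : n ≤ (eT (n:ℤ)).toNat := by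
  have h1 := eT_ge (n:ℤ) (by positivity)
  omega

lemma summable_Bcore (hq1 : ‖q‖ < 1) :
    Summable (fun j : ℤ => (j.natAbs : ℝ) * ‖q‖^((eT j).toNat)) := by
  apply Summable.of_nat_of_neg_add_one
  · apply (summable_aux hq1).of_nonneg_of_le (fun n => by positivity)
    intro n
    simp only [Int.natAbs_natCast]
    have h2 : ‖q‖^((eT (n:ℤ)).toNat) ≤ ‖q‖^n :=
      pow_le_pow_of_le_one (norm_nonneg q) hq1.le (eT_toNat_ge n)
    have h3 : (0:ℝ) ≤ ‖q‖^((eT (n:ℤ)).toNat) := by positivity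
    nlinarith [pow_nonneg (norm_nonneg q) n]
  · apply (summable_aux hq1).of_nonneg_of_le (fun n => by positivity)
    intro n
    rw [show (-((n:ℤ)+1)) = -((n:ℤ)+1) from rfl, eT_neg]
    have h4 : ((-((n:ℤ)+1)).natAbs : ℝ) = (n:ℝ)+1 := by
      rw [show (-((n:ℤ)+1)).natAbs = n+1 by omega]; push_cast; ring
    rw [h4]
    have h2 : ‖q‖^((eT (n:ℤ)).toNat) ≤ ‖q‖^n :=
      pow_le_pow_of_le_one (norm_nonneg q) hq1.le (eT_toNat_ge n)
    have h5 : (0:ℝ) ≤ (n:ℝ)+1 := by positivity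
    nlinarith

lemma norm_q_zpow_eT (hq0 : q ≠ 0) (j : ℤ) : ‖q^(eT j)‖ = ‖q‖^((eT j).toNat) := by
  rw [norm_zpow, ← zpow_natCast, Int.toNat_of_nonneg (eT_nonneg j)]

lemma norm_int_complex (j : ℤ) : ‖(j:ℂ)‖ = (j.natAbs : ℝ) := by
  rw [show ((j:ℂ)) = ((j:ℝ):ℂ) by push_cast; ring, Complex.norm_real, Real.norm_eq_abs,
    Nat.cast_natAbs]
  exact Int.cast_abs.symm

lemma norm_term_eq (hq0 : q ≠ 0) (n : ℕ) (j : ℤ) :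
    ‖term q n j‖ = (j.natAbs : ℝ) * ‖gbZ q (2*n) ((n:ℤ)+j)‖ * ‖q‖^((eT j).toNat) := by
  rw [term, mterm, norm_mul, norm_mul, norm_mul, norm_q_zpow_eT hq0,
    norm_zpow, norm_neg, norm_one, one_zpow, one_mul, norm_int_complex]
  ring

lemma summable_gg (hq0 : q ≠ 0) (hq1 : ‖q‖ < 1) :
    Summable (fun j : ℤ => (j:ℂ) * (-1:ℂ)^j * q^(eT j)) := by
  apply Summable.of_norm_bounded (summable_Bcore hq1)
  intro j
  rw [norm_mul, norm_mul, norm_q_zpow_eT hq0, norm_zpow, norm_neg, norm_one, one_zpow,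
    mul_one, norm_int_complex]

lemma tsum_gg (hq0 : q ≠ 0) (hq1 : ‖q‖ < 1) :
    ∑' j : ℤ, ((j:ℂ) * (-1:ℂ)^j * q^(eT j)) = (Pq q)^3 := by
  have hP := Pq_ne_zero hq1
  obtain ⟨δ, hδ, hlb⟩ := exists_Aprod_lb hq1
  set C := Real.exp (∑' i : ℕ, ‖q‖^(i+1)) with hC
  have hub : ∀ m, ‖Aprod q m‖ ≤ C := fun m => Aprod_le hq1 m
  set glim : ℤ → ℂ := fun j => ((j:ℂ) * (-1:ℂ)^j * q^(eT j)) * (Pq q)⁻¹ with hglim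
  have htan : Tendsto (fun n => ∑' j : ℤ, term q n j) atTop (𝓝 (∑' j : ℤ, glim j)) := by
    apply tendsto_tsum_of_dominated_convergence
      (bound := fun j : ℤ => (C/δ^2) * ((j.natAbs : ℝ) * ‖q‖^((eT j).toNat)))
      ((summable_Bcore hq1).mul_left _)
    · intro j
      have := (tendsto_gbZ hq0 hq1 j).const_mul ((j:ℂ) * (-1:ℂ)^j * q^(eT j))
      apply this.congr
      intro n
      rw [term, mterm]
      ring
    · apply Filter.Eventually.of_forall
      intro n j
      rw [norm_term_eq hq0 n j]
      have hgb := gbZ_norm_le hq0 hδ hlb hub (2*n) ((n:ℤ)+j)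
      have h1 : (0:ℝ) ≤ (j.natAbs : ℝ) := by positivity
      have h2 : (0:ℝ) ≤ ‖q‖^((eT j).toNat) := by positivity
      calc (j.natAbs:ℝ) * ‖gbZ q (2*n) ((n:ℤ)+j)‖ * ‖q‖^((eT j).toNat)
          ≤ (j.natAbs:ℝ) * (C/δ^2) * ‖q‖^((eT j).toNat) :=
            mul_le_mul_of_nonneg_right (mul_le_mul_of_nonneg_left hgb h1) h2
        _ = C/δ^2 * ((j.natAbs:ℝ) * ‖q‖^((eT j).toNat)) := by ring
  have h2 : Tendsto (fun n => Lsum q (n+1)) atTop (𝓝 (∑' j : ℤ, glim j)) := by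
    have : Tendsto (fun n : ℕ => n+1) atTop atTop := tendsto_add_atTop_nat 1
    exact htan.comp this
  have h3 : Tendsto (fun n => Lsum q (n+1)) atTop (𝓝 (Pq q * Pq q)) := by
    have ha : Tendsto (fun n : ℕ => Aprod q (n+1) * Aprod q n) atTop (𝓝 (Pq q * Pq q)) :=
      ((tendsto_Aprod hq1).comp (tendsto_add_atTop_nat 1)).mul (tendsto_Aprod hq1)
    exact ha.congr (fun n => (Lsum_eq hq0 n).symm)
  have hPP : ∑' j : ℤ, glim j = Pq q * Pq q := tendsto_nhds_unique h2 h3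
  have : ∑' j : ℤ, ((j:ℂ) * (-1:ℂ)^j * q^(eT j)) = (∑' j : ℤ, glim j) * Pq q := by
    rw [← tsum_mul_right]
    apply tsum_congr
    intro j
    rw [hglim]
    field_simp
  rw [this, hPP]
  ring

lemma jacobi_cube (hq0 : q ≠ 0) (hq1 : ‖q‖ < 1) :
    ∑' n : ℕ, ((-1:ℂ)^n * (2*(n:ℂ)+1) * q^(eT (n:ℤ))) = (Pq q)^3 := by
  rw [← tsum_gg hq0 hq1, ← tsum_nat_add_neg_add_one (summable_gg hq0 hq1)]
  apply tsum_congr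
  intro n
  rw [eT_neg, zpow_neg, neg_one_zpow_add_one, zpow_natCast]
  push_cast
  have hinv : ((-(-1:ℂ)^(n:ℕ)))⁻¹ = -(-1:ℂ)^(n:ℕ) := by
    rcases Nat.even_or_odd n with h | h
    · rw [h.neg_one_pow]; norm_num
    · rw [h.neg_one_pow]; norm_num
  rw [hinv]
  ring

end Limits

lemma kron_even_aux (m : ℕ) : ((if (2*(m:ℤ)+1) % 4 = 1 then (1:ℤ) else if (2*(m:ℤ)+1) % 4 = 3 then -1 else 0 : ℤ) : ℂ) = (-1:ℂ)^m := by
  rcases Nat.even_or_odd m with ⟨l, rfl⟩ | ⟨l, rfl⟩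
  · rw [if_pos (by push_cast; omega), Even.neg_one_pow ⟨l, rfl⟩]
    norm_num
  · rw [if_neg (by push_cast; omega), if_pos (by push_cast; omega),
      Odd.neg_one_pow ⟨l, rfl⟩]
    norm_num

lemma kron_odd_aux (m : ℕ) : (if (2*(m:ℤ)+2) % 4 = 1 then (1:ℤ) else if (2*(m:ℤ)+2) % 4 = 3 then -1 else 0) = 0 := by
  rw [if_neg (by omega), if_neg (by omega)]

/-- Euler–Jacobi identity: `η(τ)³ = ∑_{n > 0} (−4/n) · n · q^{n²/8}`. -/
theorem dedekindEta_pow_three (τ : ℂ) (hτ : 0 < τ.im) :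
    dedekindEta τ ^ 3 =
      ∑' n : ℕ, (kronNeg4 (n + 1) : ℂ) * (n + 1) *
        Complex.exp (Real.pi * Complex.I * τ * ((n : ℂ) + 1) ^ 2 / 4) := by
  set q : ℂ := Complex.exp (2 * Real.pi * Complex.I * τ) with hqdef
  have hq0 : q ≠ 0 := Complex.exp_ne_zero _
  have hre : (2 * (Real.pi:ℂ) * Complex.I * τ).re = -(2 * Real.pi * τ.im) := by
    simp [Complex.mul_re, Complex.mul_im]
  have hq1 : ‖q‖ < 1 := by
    rw [hqdef, Complex.norm_exp, hre]
    rw [Real.exp_lt_one_iff]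
    have := Real.pi_pos
    nlinarith
  -- the series terms
  set f : ℕ → ℂ := fun n => (kronNeg4 (n + 1) : ℂ) * (n + 1) *
    Complex.exp (Real.pi * Complex.I * τ * ((n : ℂ) + 1) ^ 2 / 4) with hf
  have hE : ∀ m : ℕ, ((eT (m:ℤ) : ℤ) : ℂ) * 2 = (m:ℂ) * ((m:ℂ) + 1) := by
    intro m
    have h := two_eT (m:ℤ)
    have : ((2 * eT (m:ℤ) : ℤ) : ℂ) = (((m:ℤ) * ((m:ℤ) + 1) : ℤ) : ℂ) := by rw [h]
    push_cast at this
    linear_combination this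
  have hexp : ∀ m : ℕ, Complex.exp ((Real.pi:ℂ) * Complex.I * τ * (((2*m:ℕ):ℂ) + 1)^2 / 4)
      = Complex.exp ((Real.pi:ℂ) * Complex.I * τ / 4) * q ^ (eT (m:ℤ)) := by
    intro m
    rw [hqdef, ← Complex.exp_int_mul, ← Complex.exp_add]
    congr 1
    push_cast
    linear_combination (-((Real.pi:ℂ) * Complex.I * τ)) * hE m
  have hpair : Summable (fun n : ℕ => (-1:ℂ)^n * (2*(n:ℂ)+1) * q^(eT (n:ℤ))) := by
    apply (summable_gg hq0 hq1).nat_add_neg_add_one.congr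
    intro n
    rw [eT_neg, zpow_neg, neg_one_zpow_add_one, zpow_natCast]
    push_cast
    have hinv : ((-(-1:ℂ)^(n:ℕ)))⁻¹ = -(-1:ℂ)^(n:ℕ) := by
      rcases Nat.even_or_odd n with h | h
      · rw [h.neg_one_pow]; norm_num
      · rw [h.neg_one_pow]; norm_num
    rw [hinv]
    ring
  have heven : ∀ m : ℕ, f (2*m)
      = Complex.exp ((Real.pi:ℂ) * Complex.I * τ / 4)
        * ((-1:ℂ)^m * (2*(m:ℂ)+1) * q^(eT (m:ℤ))) := by
    intro m
    rw [hf]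
    simp only
    rw [hexp m]
    have hk : ((kronNeg4 (((2*m:ℕ):ℤ) + 1) : ℤ) : ℂ) = (-1:ℂ)^m := by
      have harg : ((2*m:ℕ) : ℤ) + 1 = 2*(m:ℤ)+1 := by push_cast; ring
      rw [harg]
      simp only [kronNeg4]
      exact kron_even_aux m
    rw [hk]
    push_cast
    ring
  have hodd : ∀ m : ℕ, f (2*m+1) = 0 := by
    intro m
    rw [hf]
    simp only
    have harg : ((2*m+1:ℕ) : ℤ) + 1 = 2*(m:ℤ)+2 := by push_cast; ring
    rw [harg]
    simp only [kronNeg4]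
    rw [kron_odd_aux m]
    simp
  have Seven : Summable (fun m : ℕ => f (2*m)) := by
    apply (hpair.mul_left (Complex.exp ((Real.pi:ℂ) * Complex.I * τ / 4))).congr
    intro m
    exact (heven m).symm
  have Sodd : Summable (fun m : ℕ => f (2*m+1)) :=
    summable_zero.congr (fun m => (hodd m).symm)
  have hded : dedekindEta τ = Complex.exp ((Real.pi:ℂ) * Complex.I * τ / 12) * Pq q := by
    rw [dedekindEta, ← hqdef]
    rfl
  calc dedekindEta τ ^ 3
      = Complex.exp ((Real.pi:ℂ) * Complex.I * τ / 4) * (Pq q)^3 := by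
        rw [hded, mul_pow, ← Complex.exp_nat_mul]
        congr 2
        push_cast
        ring
    _ = (∑' m : ℕ, f (2*m)) + (∑' m : ℕ, f (2*m+1)) := by
        rw [tsum_congr hodd, tsum_zero, add_zero, tsum_congr heven, tsum_mul_left,
          jacobi_cube hq0 hq1]
    _ = ∑' n : ℕ, f n := tsum_even_add_odd Seven Sodd
end

section
/- The triple product identity for theta with characteristic (1,0) of level 2: ∏_{n ≥ 1}(1 − qⁿ)(1 + q^{n−1})(1 + qⁿ) = 2 ∑_{n ≥ 0} q^{n(n+1)/2} as formal power series in q. -/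
open PowerSeries


open Finset

namespace TP

noncomputable section

abbrev R : Type := PowerSeries ℤ

abbrev Q : R := PowerSeries.X

abbrev P : Type := Polynomial R

abbrev PX : P := Polynomial.X

abbrev PC : R →+* P := Polynomial.C

/-- triangular numbers -/
def T : ℕ → ℕ
  | 0 => 0
  | n + 1 => T n + (n + 1)

lemma T_eq (n : ℕ) : T n = n * (n + 1) / 2 := by
  induction n with
  | zero => rfl
  | succ n ih =>
    show T n + (n+1) = (n+1) * (n+2) / 2
    obtain ⟨c, hc⟩ := (Nat.even_mul_succ_self n).two_dvd
    have h2 : (n+1) * (n+2) = n * (n+1) + 2*(n+1) := by ring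
    omega

lemma T_ge (m : ℕ) : m ≤ T m := by
  cases m with
  | zero => exact Nat.le_refl 0
  | succ n => show n+1 ≤ T n + (n+1); omega

def A (N : ℕ) : P := ∏ n ∈ range N, (1 + PC (Q ^ (n+1)) * PX)

def Bp (N : ℕ) : P := ∏ n ∈ range N, (PX + PC (Q ^ n))

def G (N : ℕ) : P := A N * Bp N

/-- substitution X ↦ qX -/
def subH : P →+* P := Polynomial.eval₂RingHom PC (PC Q * PX)

lemma subH_coeff (p : P) (k : ℕ) : (subH p).coeff k = Q ^ k * p.coeff k := by
  induction p using Polynomial.induction_on' with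
  | add p q hp hq => simp [map_add, Polynomial.coeff_add, hp, hq, mul_add]
  | monomial n a =>
    have : subH ((Polynomial.monomial n) a) = PC a * (PC Q * PX) ^ n := by
      simp [subH, Polynomial.eval₂_monomial]
    rw [this, mul_pow, ← map_pow, ← mul_assoc, ← map_mul]
    rw [Polynomial.coeff_C_mul, Polynomial.coeff_X_pow, Polynomial.coeff_monomial]
    split_ifs with h h2 h3
    · subst h; ring
    · omega
    · omega
    · ring



lemma subH_A (N : ℕ) : subH (A N) = ∏ n ∈ range N, (1 + PC (Q ^ (n+2)) * PX) := by
  rw [A, map_prod]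
  refine prod_congr rfl fun n _ => ?_
  show Polynomial.eval₂ PC (PC Q * PX) _ = _
  rw [Polynomial.eval₂_add, Polynomial.eval₂_one, Polynomial.eval₂_mul, Polynomial.eval₂_C,
    Polynomial.eval₂_X, ← mul_assoc, ← map_mul, ← pow_succ]

lemma FE_A (N : ℕ) : (1 + PC Q * PX) * subH (A N) = (1 + PC (Q ^ (N+1)) * PX) * A N := by
  have h1 : A (N+1) = (1 + PC Q * PX) * subH (A N) := by
    rw [subH_A, A, prod_range_succ']
    rw [Finset.prod_congr rfl (g := fun n => 1 + PC (Q ^ (n+2)) * PX) (fun n _ => by norm_num)]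
    rw [mul_comm]
    norm_num
  have h2 : A (N+1) = A N * (1 + PC (Q ^ (N+1)) * PX) := by rw [A, A, prod_range_succ]
  rw [← h1, h2, mul_comm]

lemma subH_Bp (N : ℕ) : subH (Bp (N+1)) = PC (Q ^ N) * Bp N * (1 + PC Q * PX) := by
  have : subH (Bp (N+1)) = ∏ n ∈ range (N+1), (PC Q * PX + PC (Q ^ n)) := by
    rw [Bp, map_prod]
    refine prod_congr rfl fun n _ => ?_
    show Polynomial.eval₂ PC (PC Q * PX) _ = _
    rw [Polynomial.eval₂_add, Polynomial.eval₂_X, Polynomial.eval₂_C]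
  rw [this, prod_range_succ']
  have h3 : ∀ n, PC Q * PX + PC (Q ^ (n+1)) = PC Q * (PX + PC (Q ^ n)) := by
    intro n
    rw [mul_add, ← map_mul, ← pow_succ']
  calc (∏ n ∈ range N, (PC Q * PX + PC (Q ^ (n+1)))) * (PC Q * PX + PC (Q ^ 0))
      = (∏ n ∈ range N, (PC Q * (PX + PC (Q ^ n)))) * (1 + PC Q * PX) := by
        rw [Finset.prod_congr rfl (g := fun n => PC Q * (PX + PC (Q ^ n))) (fun n _ => h3 n)]
        rw [pow_zero, map_one]
        ring
    _ = PC (Q ^ N) * Bp N * (1 + PC Q * PX) := by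
        rw [prod_mul_distrib, prod_const, card_range, ← map_pow, Bp]

lemma FE_Bp (N : ℕ) :
    (PX + PC (Q ^ N)) * subH (Bp (N+1)) = PC (Q ^ N) * ((1 + PC Q * PX) * Bp (N+1)) := by
  rw [subH_Bp]
  have h2 : Bp (N+1) = Bp N * (PX + PC (Q ^ N)) := by rw [Bp, Bp, prod_range_succ]
  rw [h2]; ring

lemma one_add_QX_ne : (1 + PC Q * PX : P) ≠ 0 := by
  intro h
  have := congrArg (fun p => Polynomial.coeff p 0) h
  simp at this

lemma FE_G (M : ℕ) :
    (PX + PC (Q ^ M)) * subH (G (M+1)) =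
      PC (Q ^ M) * ((1 + PC (Q ^ (M+2)) * PX) * G (M+1)) := by
  apply mul_left_cancel₀ one_add_QX_ne
  have hA := FE_A (M+1)
  have hB := FE_Bp M
  have : subH (G (M+1)) = subH (A (M+1)) * subH (Bp (M+1)) := by rw [G, map_mul]
  rw [this, G]
  calc (1 + PC Q * PX) * ((PX + PC (Q ^ M)) * (subH (A (M+1)) * subH (Bp (M+1))))
      = ((1 + PC Q * PX) * subH (A (M+1))) * ((PX + PC (Q ^ M)) * subH (Bp (M+1))) := by ring
    _ = ((1 + PC (Q ^ (M+2)) * PX) * A (M+1)) * (PC (Q ^ M) * ((1 + PC Q * PX) * Bp (M+1))) := by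
        rw [hA, hB]
    _ = (1 + PC Q * PX) * (PC (Q ^ M) * ((1 + PC (Q ^ (M+2)) * PX) * (A (M+1) * Bp (M+1)))) := by
        ring



/-- coefficients of `G (d+1)` -/
def b (d k : ℕ) : R := (G (d+1)).coeff k

lemma X_pow_ne (t : ℕ) : (Q : R) ^ t ≠ 0 := pow_ne_zero _ PowerSeries.X_ne_zero

/-- the master coefficient recurrence -/
lemma rec_b (d k : ℕ) :
    Q ^ k * b d k + Q ^ d * (Q ^ (k+1) * b d (k+1)) =
      Q ^ d * (b d (k+1) + Q ^ (d+2) * b d k) := by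
  have h := congrArg (fun p : P => p.coeff (k+1)) (FE_G d)
  rw [add_mul, Polynomial.coeff_add, Polynomial.coeff_X_mul, Polynomial.coeff_C_mul,
    subH_coeff, subH_coeff] at h
  rw [Polynomial.coeff_C_mul, add_mul, one_mul, Polynomial.coeff_add, mul_assoc,
    Polynomial.coeff_C_mul, Polynomial.coeff_X_mul] at h
  exact h

lemma UPf (d j : ℕ) :
    (1 - Q ^ (d+j+1)) * b d (d+j+1) = Q ^ j * b d (d+j) - Q ^ (d+2) * b d (d+j) := by
  apply mul_left_cancel₀ (X_pow_ne d)
  have h := rec_b d (d+j)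
  linear_combination -h

lemma DOWNf (d j m : ℕ) (hj : j + m = d) :
    (1 - Q ^ (d+2+j)) * b d m = Q ^ j * b d (m+1) - Q ^ (d+1) * b d (m+1) := by
  apply mul_left_cancel₀ (X_pow_ne m)
  have h := rec_b d m
  rw [← hj] at h ⊢
  linear_combination h


def Su (d n : ℕ) : R := ∏ i ∈ range n, (1 - Q ^ (d+2+i))

def Pd (d n : ℕ) : R := ∏ i ∈ range n, (1 - Q ^ (d+1-i))

lemma TELup (d : ℕ) : ∀ n, n ≤ d + 1 →
    Su d n * b d (d+1+n) = Q ^ (T n) * (Pd d n * b d (d+1)) := by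
  intro n
  induction n with
  | zero => intro _; simp [Su, Pd, T]
  | succ n ih =>
    intro hn
    have ihn := ih (by omega)
    have hup := UPf d (n+1)
    have e1 : d + (n+1) + 1 = d + 1 + (n+1) := by omega
    rw [e1] at hup
    have e2 : d + (n+1) = d + 1 + n := by omega
    rw [e2] at hup
    have hsplit : (Q : R) ^ (d+2) = Q ^ (n+1) * Q ^ (d+1-n) := by
      rw [← pow_add]; congr 1; omega
    have hTs : T (n+1) = T n + (n+1) := rfl
    rw [Su, prod_range_succ, ← Su, Pd, prod_range_succ, ← Pd, hTs]
    have e3 : d + 2 + n = d + 1 + (n+1) := by omega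
    rw [e3]
    calc Su d n * (1 - Q ^ (d+1+(n+1))) * b d (d+1+(n+1))
        = Su d n * ((1 - Q ^ (d+1+(n+1))) * b d (d+1+(n+1))) := by ring
      _ = Su d n * (Q ^ (n+1) * b d (d+1+n) - Q ^ (d+2) * b d (d+1+n)) := by rw [hup]
      _ = (Q ^ (n+1) - Q ^ (d+2)) * (Su d n * b d (d+1+n)) := by ring
      _ = (Q ^ (n+1) - Q ^ (d+2)) * (Q ^ (T n) * (Pd d n * b d (d+1))) := by rw [ihn]
      _ = Q ^ (T n + (n+1)) * (Pd d n * (1 - Q ^ (d+1-n)) * b d (d+1)) := by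
          rw [pow_add Q (T n) (n+1), hsplit]; ring

lemma TELdown (d : ℕ) : ∀ m, ∀ k, m + k = d →
    Su d (m+1) * b d k = Q ^ (T m) * (Pd d (m+1) * b d (d+1)) := by
  intro m
  induction m with
  | zero =>
    intro k hk
    have h0 : k = d := by omega
    rw [h0]
    have hdn := DOWNf d 0 d (by omega)
    simp only [Nat.add_zero, pow_zero, one_mul] at hdn
    rw [Su, Pd, prod_range_one, prod_range_one]
    simp only [Nat.add_zero, Nat.sub_zero]
    rw [hdn]
    show b d (d+1) - Q ^ (d+1) * b d (d+1) = Q ^ 0 * ((1 - Q ^ (d+1)) * b d (d+1))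
    ring
  | succ m ih =>
    intro k hk
    have ihn := ih (k+1) (by omega)
    have hdn := DOWNf d (m+1) k (by omega)
    have hsplit : (Q : R) ^ (d+1) = Q ^ (m+1) * Q ^ (d-m) := by
      rw [← pow_add]; congr 1; omega
    have hTs : T (m+1) = T m + (m+1) := rfl
    rw [Su, prod_range_succ, ← Su, Pd, prod_range_succ, ← Pd, hTs]
    have e4 : d + 1 - (m+1) = d - m := by omega
    rw [e4]
    calc Su d (m+1) * (1 - Q ^ (d+2+(m+1))) * b d k
        = Su d (m+1) * ((1 - Q ^ (d+2+(m+1))) * b d k) := by ring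
      _ = Su d (m+1) * (Q ^ (m+1) * b d (k+1) - Q ^ (d+1) * b d (k+1)) := by rw [hdn]
      _ = (Q ^ (m+1) - Q ^ (d+1)) * (Su d (m+1) * b d (k+1)) := by ring
      _ = (Q ^ (m+1) - Q ^ (d+1)) * (Q ^ (T m) * (Pd d (m+1) * b d (d+1))) := by rw [ihn]
      _ = Q ^ (T m + (m+1)) * (Pd d (m+1) * (1 - Q ^ (d-m)) * b d (d+1)) := by
          rw [pow_add Q (T m) (m+1), hsplit]; ring


lemma natDeg_A (N : ℕ) : (A N).natDegree ≤ N := by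
  refine le_trans (Polynomial.natDegree_prod_le _ _) ?_
  calc ∑ n ∈ range N, (1 + PC (Q ^ (n+1)) * PX).natDegree
      ≤ ∑ _n ∈ range N, 1 := by
        refine sum_le_sum fun n _ => ?_
        refine le_trans (Polynomial.natDegree_add_le _ _) ?_
        simp only [Polynomial.natDegree_one, max_le_iff]
        constructor
        · omega
        · refine le_trans (Polynomial.natDegree_mul_le) ?_
          simp [Polynomial.natDegree_X_le]
    _ = N := by simp

lemma natDeg_Bp (N : ℕ) : (Bp N).natDegree ≤ N := by
  refine le_trans (Polynomial.natDegree_prod_le _ _) ?_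
  calc ∑ n ∈ range N, (PX + PC (Q ^ n)).natDegree
      ≤ ∑ _n ∈ range N, 1 := by
        refine sum_le_sum fun n _ => ?_
        exact le_of_eq (Polynomial.natDegree_X_add_C _)
    _ = N := by simp

lemma coeff_top_A (N : ℕ) : (A N).coeff N = Q ^ (T N) := by
  induction N with
  | zero => simp [A, T]
  | succ N ih =>
    have hA : A (N+1) = A N + PC (Q ^ (N+1)) * (A N * PX) := by
      rw [A, prod_range_succ, ← A]; ring
    rw [hA, Polynomial.coeff_add, Polynomial.coeff_C_mul, Polynomial.coeff_mul_X, ih,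
      Polynomial.coeff_eq_zero_of_natDegree_lt (lt_of_le_of_lt (natDeg_A N) (by omega))]
    rw [zero_add, ← pow_add]
    congr 1
    show N + 1 + T N = T N + (N + 1)
    omega

lemma coeff_top_Bp (N : ℕ) : (Bp N).coeff N = 1 := by
  induction N with
  | zero => simp [Bp]
  | succ N ih =>
    have hB : Bp (N+1) = Bp N * PX + PC (Q ^ N) * Bp N := by
      rw [Bp, prod_range_succ, ← Bp]; ring
    rw [hB, Polynomial.coeff_add, Polynomial.coeff_mul_X, ih, Polynomial.coeff_C_mul,
      Polynomial.coeff_eq_zero_of_natDegree_lt (lt_of_le_of_lt (natDeg_Bp N) (by omega))]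
    simp

lemma b_top (d : ℕ) : b d (2*d+2) = Q ^ (T (d+1)) := by
  show (G (d+1)).coeff (2*d+2) = Q ^ (T (d+1))
  have h : (2:ℕ)*d+2 = (d+1) + (d+1) := by omega
  rw [G, h, Polynomial.coeff_mul_add_eq_of_natDegree_le (natDeg_A (d+1)) (natDeg_Bp (d+1)),
    coeff_top_A, coeff_top_Bp, mul_one]

lemma natDeg_G (d : ℕ) : (G (d+1)).natDegree ≤ 2*d+2 := by
  refine le_trans (Polynomial.natDegree_mul_le) ?_
  have := natDeg_A (d+1); have := natDeg_Bp (d+1); omega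

/-- the central identity -/
lemma CENTRAL (d : ℕ) : Pd d (d+1) * b d (d+1) = Su d (d+1) := by
  have h := TELup d (d+1) (le_refl _)
  have hidx : d + 1 + (d+1) = 2*d+2 := by omega
  rw [hidx, b_top] at h
  apply mul_left_cancel₀ (X_pow_ne (T (d+1)))
  rw [← h]
  ring


lemma prod_one_sub (c n : ℕ) (e : ℕ → ℕ) (he : ∀ i, i < n → c ≤ e i) :
    ∃ r : R, ∏ i ∈ range n, (1 - Q ^ (e i)) = 1 + Q ^ c * r := by
  induction n with
  | zero => exact ⟨0, by simp⟩
  | succ n ih =>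
    obtain ⟨r, hr⟩ := ih (fun i hi => he i (by omega))
    have hsplit : (Q : R) ^ (e n) = Q ^ c * Q ^ (e n - c) := by
      rw [← pow_add]; congr 1
      have := he n (by omega); omega
    refine ⟨r - Q ^ (e n - c) - Q ^ (e n) * r, ?_⟩
    rw [prod_range_succ, hr]
    calc (1 + Q ^ c * r) * (1 - Q ^ (e n))
        = 1 + Q ^ c * r - Q ^ (e n) - Q ^ (e n) * (Q ^ c * r) := by ring
      _ = 1 + Q ^ c * (r - Q ^ (e n - c) - Q ^ (e n) * r) := by rw [hsplit]; ring

lemma coeff_kill (d c : ℕ) (h : d < c) (w : R) : PowerSeries.coeff (R := ℤ) d (Q ^ c * w) = 0 := by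
  rw [PowerSeries.coeff_X_pow_mul' w c d, if_neg (by omega)]

lemma coeff_key (d c t : ℕ) (hc : d < t + c) (w s : R) :
    PowerSeries.coeff (R := ℤ) d (Q ^ t * ((1 + Q ^ c * w) * (1 + Q ^ (d+1) * s))) =
      if d = t then 1 else 0 := by
  have expand : Q ^ t * ((1 + Q ^ c * w) * (1 + Q ^ (d+1) * s)) =
      Q ^ t + (Q ^ (t+c) * w + (Q ^ (t+(d+1)) * s + Q ^ (t+c+(d+1)) * (w * s))) := by
    ring
  rw [expand, map_add, map_add, map_add, coeff_kill d (t+c) (by omega),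
    coeff_kill d (t+(d+1)) (by omega), coeff_kill d (t+c+(d+1)) (by omega),
    PowerSeries.coeff_X_pow]
  ring

/-- the (truncated) q-Pochhammer product from the theorem statement -/
def PQ (d : ℕ) : R := ∏ n ∈ range (d+1), (1 - Q ^ (n+1))

lemma PQ_eq_Pd (d : ℕ) : PQ d = Pd d (d+1) := by
  rw [PQ, Pd, ← Finset.prod_range_reflect]
  refine prod_congr rfl fun j hj => ?_
  rw [mem_range] at hj
  have he : d + 1 - 1 - j + 1 = d + 1 - j := by omega
  rw [he]

lemma coeff_up (d n : ℕ) (hn : n ≤ d + 1) :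
    PowerSeries.coeff (R := ℤ) d (PQ d * b d (d+1+n)) = if d = T n then 1 else 0 := by
  have tel := TELup d n hn
  have cen := CENTRAL d
  have key : Su d n * (PQ d * b d (d+1+n)) = Q ^ (T n) * (Pd d n * Su d (d+1)) := by
    rw [PQ_eq_Pd]
    calc Su d n * (Pd d (d+1) * b d (d+1+n))
        = Pd d (d+1) * (Su d n * b d (d+1+n)) := by ring
      _ = Pd d (d+1) * (Q ^ (T n) * (Pd d n * b d (d+1))) := by rw [tel]
      _ = Q ^ (T n) * (Pd d n * (Pd d (d+1) * b d (d+1))) := by ring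
      _ = Q ^ (T n) * (Pd d n * Su d (d+1)) := by rw [cen]
  obtain ⟨r, hr⟩ := prod_one_sub (d+1) n (fun i => d+2+i) (fun i _ => by show _ ≤ d+2+i; omega)
  obtain ⟨s, hs⟩ := prod_one_sub (d+1) (d+1) (fun i => d+2+i) (fun i _ => by show _ ≤ d+2+i; omega)
  obtain ⟨w, hw⟩ := prod_one_sub (d+2-n) n (fun i => d+1-i) (fun i hi => by show _ ≤ d+1-i; omega)
  rw [Su, hr, Su, hs, Pd, hw] at key
  have hco := congrArg (PowerSeries.coeff (R := ℤ) d) key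
  rw [add_mul, one_mul, map_add, mul_assoc, coeff_kill d (d+1) (by omega), add_zero] at hco
  rw [hco]
  have hTge : n ≤ T n + 1 := by
    cases n with
    | zero => omega
    | succ m => have := T_ge (m+1); omega
  exact coeff_key d (d+2-n) (T n) (by omega) w s

lemma coeff_down (d m k : ℕ) (hmk : m + k = d) :
    PowerSeries.coeff (R := ℤ) d (PQ d * b d k) = if d = T m then 1 else 0 := by
  have tel := TELdown d m k hmk
  have cen := CENTRAL d
  have key : Su d (m+1) * (PQ d * b d k) = Q ^ (T m) * (Pd d (m+1) * Su d (d+1)) := by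
    rw [PQ_eq_Pd]
    calc Su d (m+1) * (Pd d (d+1) * b d k)
        = Pd d (d+1) * (Su d (m+1) * b d k) := by ring
      _ = Pd d (d+1) * (Q ^ (T m) * (Pd d (m+1) * b d (d+1))) := by rw [tel]
      _ = Q ^ (T m) * (Pd d (m+1) * (Pd d (d+1) * b d (d+1))) := by ring
      _ = Q ^ (T m) * (Pd d (m+1) * Su d (d+1)) := by rw [cen]
  obtain ⟨r, hr⟩ := prod_one_sub (d+1) (m+1) (fun i => d+2+i) (fun i _ => by show _ ≤ d+2+i; omega)
  obtain ⟨s, hs⟩ := prod_one_sub (d+1) (d+1) (fun i => d+2+i) (fun i _ => by show _ ≤ d+2+i; omega)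
  obtain ⟨w, hw⟩ := prod_one_sub (d+1-m) (m+1) (fun i => d+1-i) (fun i hi => by show _ ≤ d+1-i; omega)
  rw [Su, hr, Su, hs, Pd, hw] at key
  have hco := congrArg (PowerSeries.coeff (R := ℤ) d) key
  rw [add_mul, one_mul, map_add, mul_assoc, coeff_kill d (d+1) (by omega), add_zero] at hco
  rw [hco]
  have hTge : m ≤ T m := T_ge m
  exact coeff_key d (d+1-m) (T m) (by omega) w s


lemma eval_A (N : ℕ) : Polynomial.eval 1 (A N) = ∏ n ∈ range N, (1 + Q ^ (n+1)) := by
  rw [A, Polynomial.eval_prod]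
  exact prod_congr rfl fun n _ => by simp

lemma eval_Bp (N : ℕ) : Polynomial.eval 1 (Bp N) = ∏ n ∈ range N, (1 + Q ^ n) := by
  rw [Bp, Polynomial.eval_prod]
  refine prod_congr rfl fun n _ => by simp [add_comm]

lemma big_prod (d : ℕ) :
    (∏ n ∈ range (d+1), ((1 - Q ^ (n+1)) * (1 + Q ^ n) * (1 + Q ^ (n+1)))) =
      PQ d * Polynomial.eval 1 (G (d+1)) := by
  rw [G, Polynomial.eval_mul, eval_A, eval_Bp, PQ]
  rw [prod_mul_distrib, prod_mul_distrib]
  ring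

lemma eval_G_sum (d : ℕ) :
    Polynomial.eval 1 (G (d+1)) = ∑ k ∈ range (2*d+3), b d k := by
  rw [Polynomial.eval_eq_sum_range' (n := 2*d+3) (by have := natDeg_G d; omega) 1]
  exact sum_congr rfl fun k _ => by rw [one_pow, mul_one]; rfl

lemma main_coeff (d : ℕ) :
    PowerSeries.coeff (R := ℤ) d
      (∏ n ∈ range (d+1), ((1 - Q ^ (n+1)) * (1 + Q ^ n) * (1 + Q ^ (n+1)))) =
      2 * ∑ n ∈ range (d+1), (if d = T n then 1 else 0) := by
  rw [big_prod, eval_G_sum, mul_sum, map_sum]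
  have hterm : ∀ k ∈ range (2*d+3), PowerSeries.coeff (R := ℤ) d (PQ d * b d k) =
      (if k ≤ d then (if d = T (d-k) then (1:ℤ) else 0)
        else (if d = T (k-(d+1)) then 1 else 0)) := by
    intro k hk
    rw [mem_range] at hk
    by_cases h : k ≤ d
    · rw [if_pos h]
      exact coeff_down d (d-k) k (by omega)
    · rw [if_neg h]
      obtain ⟨n, rfl⟩ : ∃ n, k = d+1+n := ⟨k-(d+1), by omega⟩
      have he : d+1+n-(d+1) = n := by omega
      rw [he]
      exact coeff_up d n (by omega)
  rw [sum_congr rfl hterm]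
  have hsplit : (2:ℕ)*d+3 = (d+1) + (d+2) := by omega
  rw [hsplit, Finset.sum_range_add]
  have h1 : ∑ k ∈ range (d+1),
      (if k ≤ d then (if d = T (d-k) then (1:ℤ) else 0)
        else (if d = T (k-(d+1)) then 1 else 0)) =
      ∑ k ∈ range (d+1), (if d = T (d-k) then (1:ℤ) else 0) := by
    refine sum_congr rfl fun k hk => ?_
    rw [mem_range] at hk
    rw [if_pos (by omega)]
  have h2 : ∑ i ∈ range (d+2),
      (if (d+1)+i ≤ d then (if d = T (d-((d+1)+i)) then (1:ℤ) else 0)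
        else (if d = T ((d+1)+i-(d+1)) then 1 else 0)) =
      ∑ i ∈ range (d+2), (if d = T i then (1:ℤ) else 0) := by
    refine sum_congr rfl fun i hi => ?_
    rw [if_neg (by omega)]
    have he : (d+1)+i-(d+1) = i := by omega
    rw [he]
  rw [h1, h2]
  have h3 : ∑ k ∈ range (d+1), (if d = T (d-k) then (1:ℤ) else 0) =
      ∑ k ∈ range (d+1), (if d = T k then (1:ℤ) else 0) := by
    have hr := Finset.sum_range_reflect (fun k => if d = T k then (1:ℤ) else 0) (d+1)
    rw [← hr]
    refine sum_congr rfl fun k hk => ?_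
    rw [mem_range] at hk
    have he : d + 1 - 1 - k = d - k := by omega
    rw [he]
  have h4 : ∑ i ∈ range (d+2), (if d = T i then (1:ℤ) else 0) =
      ∑ i ∈ range (d+1), (if d = T i then (1:ℤ) else 0) := by
    rw [Finset.sum_range_succ]
    have : ¬ (d = T (d+1)) := by have := T_ge (d+1); omega
    rw [if_neg this, add_zero]
  rw [h3, h4]
  ring

end

end TP

/-- The triple product identity
`∏_{n ≥ 1} (1 − qⁿ)(1 + q^{n−1})(1 + qⁿ) = 2 ∑_{n ≥ 0} q^{n(n+1)/2}`
as formal power series over `ℤ`, stated coefficient-wise: every coefficient of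
degree `d` of the (suitably truncated, which does not affect degrees `≤ d`)
product equals the corresponding coefficient of the right-hand side. -/
theorem triple_product_theta_char_one_zero (d : ℕ) :
    PowerSeries.coeff (R := ℤ) d
        (∏ n ∈ Finset.range (d + 1),
          ((1 - (PowerSeries.X : ℤ⟦X⟧) ^ (n + 1)) * (1 + (PowerSeries.X : ℤ⟦X⟧) ^ n) *
            (1 + (PowerSeries.X : ℤ⟦X⟧) ^ (n + 1)))) =
      PowerSeries.coeff (R := ℤ) d
        (2 * ∑ n ∈ Finset.range (d + 1), (PowerSeries.X : ℤ⟦X⟧) ^ (n * (n + 1) / 2)) := by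
  have h1 := TP.main_coeff d
  have h2 : PowerSeries.coeff (R := ℤ) d
      (2 * ∑ n ∈ Finset.range (d + 1), (PowerSeries.X : ℤ⟦X⟧) ^ (n * (n + 1) / 2)) =
      2 * ∑ n ∈ Finset.range (d + 1), (if d = TP.T n then (1:ℤ) else 0) := by
    rw [two_mul, map_add, map_sum]
    have hc : ∀ n ∈ Finset.range (d+1),
        PowerSeries.coeff (R := ℤ) d ((PowerSeries.X : ℤ⟦X⟧) ^ (n * (n + 1) / 2)) =
          (if d = TP.T n then (1:ℤ) else 0) := by
      intro n _
      rw [PowerSeries.coeff_X_pow, TP.T_eq]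
    rw [Finset.sum_congr rfl hc]
    ring
  rw [h2]
  exact h1
end

section
/- A complete set of coset representatives of Γ₀(N)\M_N(m) is given by the matrices M_{f/e}·(a b; 0 d) where f/e runs over the cusps of Γ₀(N) (e | N, f mod gcd(e, N/e), gcd(e,f) = 1), ad = m with ae ≡ 0 mod N, and b runs mod h_e·d, where M_{f/e} ∈ SL₂(Z) has first column (f, e) and h_e = N/gcd(e², N). -/
open scoped MatrixGroups
open Matrix

lemma exists_coprime_lift (r n : ℤ) (M : ℕ) (hM : M ≠ 0)
    (h : ∀ p : ℕ, p.Prime → p ∣ M → (p:ℤ) ∣ r → ¬ (p:ℤ) ∣ n) :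
    ∃ k : ℤ, Int.gcd (r + n * k) M = 1 := by
  classical
  refine ⟨(M.primeFactors.filter (fun p : ℕ => ¬ (p:ℤ) ∣ r)).prod (fun p : ℕ => (p:ℤ)), ?_⟩
  set k : ℤ := (M.primeFactors.filter (fun p : ℕ => ¬ (p:ℤ) ∣ r)).prod (fun p : ℕ => (p:ℤ)) with hk
  set x : ℤ := r + n * k with hxdef
  by_contra hg
  obtain ⟨p, hp, hpd⟩ := Nat.exists_prime_and_dvd hg
  have hpM : p ∣ M := by
    have := Nat.dvd_trans hpd (Nat.gcd_dvd_right x.natAbs M)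
    simpa using this
  have hpx : (p:ℤ) ∣ x := by
    have h1 : p ∣ x.natAbs := Nat.dvd_trans hpd (Nat.gcd_dvd_left x.natAbs M)
    exact Int.natAbs_dvd_natAbs.mp (by simpa using h1)
  have hpprime : Prime (p:ℤ) := Int.prime_iff_natAbs_prime.mpr (by simpa using hp)
  by_cases hpr : (p:ℤ) ∣ r
  · have hpn : ¬ (p:ℤ) ∣ n := h p hp hpM hpr
    have hpk : ¬ (p:ℤ) ∣ k := by
      intro hdvd
      rw [hk] at hdvd
      obtain ⟨q, hq, hq2⟩ := hpprime.exists_mem_finset_dvd hdvd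
      simp only [Finset.mem_filter, Nat.mem_primeFactors] at hq
      have hpq : p = q := (Nat.prime_dvd_prime_iff_eq hp hq.1.1).mp (by exact_mod_cast hq2)
      exact hq.2 (hpq ▸ hpr)
    have hnk : (p:ℤ) ∣ n * k := by
      have : (p:ℤ) ∣ x - r := dvd_sub hpx hpr
      simpa [hxdef] using this
    rcases hpprime.dvd_mul.mp hnk with h1 | h1
    · exact hpn h1
    · exact hpk h1
  · have hpk : (p:ℤ) ∣ k := by
      rw [hk]
      refine Finset.dvd_prod_of_mem _ ?_
      simp only [Finset.mem_filter, Nat.mem_primeFactors]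
      exact ⟨⟨hp, hpM, hM⟩, hpr⟩
    have : (p:ℤ) ∣ r := by
      have h2 : (p:ℤ) ∣ x - n * k := dvd_sub hpx (Dvd.dvd.mul_left hpk n)
      simpa [hxdef] using h2
    exact hpr this

lemma part1 (N m : ℕ) (hN : 0 < N) (hm : 0 < m)
    (A : Matrix (Fin 2) (Fin 2) ℤ) (hdet : A.det = m) (hq : (N : ℤ) ∣ A 1 0) :
    ∃ γ ∈ CongruenceSubgroup.Gamma0 N, ∃ σ : SL(2, ℤ), ∃ e a d b : ℕ, ∃ f : ℤ,
      (σ 0 0 : ℤ) = f ∧ (σ 1 0 : ℤ) = e ∧ e ∣ N ∧ 0 < e ∧ IsCoprime f (e : ℤ) ∧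
      a * d = m ∧ N ∣ a * e ∧ b < (N / Nat.gcd (e ^ 2) N) * d ∧
      A = (γ : Matrix (Fin 2) (Fin 2) ℤ) * (σ : Matrix (Fin 2) (Fin 2) ℤ) *
            !![(a : ℤ), (b : ℤ); 0, (d : ℤ)] := by
  have hdet2 : A 0 0 * A 1 1 - A 0 1 * A 1 0 = (m:ℤ) := by
    rw [← Matrix.det_fin_two]; exact hdet
  set p := A 0 0 with hp
  set q := A 1 0 with hqd
  set rr := A 0 1 with hrr
  set ss := A 1 1 with hss
  -- the gcd of the first column
  set g : ℕ := Int.gcd p q with hg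
  have hgpos : 0 < g := by
    rcases Nat.eq_zero_or_pos g with h0 | h; swap
    · exact h
    · exfalso
      obtain ⟨h1, h2⟩ := Int.gcd_eq_zero_iff.mp h0
      rw [h1, h2] at hdet2
      simp at hdet2
      omega
  have hgz : (g:ℤ) ≠ 0 := by exact_mod_cast hgpos.ne'
  obtain ⟨f₀, hf₀⟩ : (g:ℤ) ∣ p := Int.gcd_dvd_left _ _
  obtain ⟨c₀, hc₀⟩ : (g:ℤ) ∣ q := Int.gcd_dvd_right _ _
  set α := Int.gcdA p q with hα
  set β := Int.gcdB p q with hβ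
  have hbez : (g:ℤ) = p * α + q * β := Int.gcd_eq_gcd_ab p q
  have hdetU : f₀ * α + β * c₀ = 1 := by
    have h1 : (g:ℤ) * (f₀ * α + β * c₀) = (g:ℤ) * 1 := by
      linear_combination -α * hf₀ - β * hc₀ - hbez
    exact mul_left_cancel₀ hgz h1
  set dz : ℤ := -c₀ * rr + f₀ * ss with hdz
  have hgd : (g:ℤ) * dz = (m:ℤ) := by
    linear_combination hdet2 - ss * hf₀ + rr * hc₀
  have hdzpos : 0 < dz := by
    nlinarith [(by exact_mod_cast hm : (0:ℤ) < (m:ℤ)), (by exact_mod_cast hgpos : (0:ℤ) < (g:ℤ))]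
  set d : ℕ := dz.toNat with hdn
  have hd : (d:ℤ) = dz := Int.toNat_of_nonneg hdzpos.le
  have hdpos : 0 < d := by
    have : (0:ℤ) < (d:ℤ) := by rw [hd]; exact hdzpos
    exact_mod_cast this
  set b₀ : ℤ := α * rr + β * ss with hb₀
  -- A = U * T₀
  set Umat : Matrix (Fin 2) (Fin 2) ℤ := !![f₀, -β; c₀, α] with hUmat
  have hAU : A = Umat * !![(g:ℤ), b₀; 0, dz] := by
    rw [Matrix.eta_fin_two A, hUmat, Matrix.mul_fin_two]
    apply Matrix.ext
    intro i j
    fin_cases i <;> fin_cases j <;>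
      simp only [Matrix.cons_val', Matrix.cons_val_zero, Matrix.cons_val_one, Matrix.head_cons,
        Matrix.head_fin_const, Matrix.empty_val', Matrix.cons_val_fin_one, Fin.zero_eta,
        Fin.mk_one, Matrix.of_apply]
    · linear_combination hf₀
    · linear_combination -rr * hdetU
    · linear_combination hc₀
    · linear_combination -ss * hdetU
  -- e = gcd(c₀, N)
  set e : ℕ := Int.gcd c₀ (N:ℤ) with he
  have hepos : 0 < e := by
    rw [he]
    rw [Int.gcd_pos_iff]
    right
    exact_mod_cast hN.ne'
  have hez : (e:ℤ) ≠ 0 := by exact_mod_cast hepos.ne'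
  obtain ⟨c₁, hc₁⟩ : (e:ℤ) ∣ c₀ := Int.gcd_dvd_left _ _
  have heN : e ∣ N := by
    have : (e:ℤ) ∣ (N:ℤ) := Int.gcd_dvd_right _ _
    exact_mod_cast this
  set n₁ : ℕ := N / e with hn₁def
  have hn₁ : e * n₁ = N := Nat.mul_div_cancel' heN
  -- N ∣ g * e
  have hNge : N ∣ g * e := by
    have h1 : (N:ℤ) ∣ (g:ℤ) * c₀ := by rw [← hc₀]; exact hq
    have h2 : (N:ℤ) ∣ (g:ℤ) * (N:ℤ) := Dvd.dvd.mul_left dvd_rfl (g:ℤ)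
    have h3 : (N:ℤ) ∣ ↑(Int.gcd ((g:ℤ) * c₀) ((g:ℤ) * (N:ℤ))) := Int.dvd_coe_gcd h1 h2
    rw [Int.gcd_mul_left] at h3
    have h4 : (N:ℤ) ∣ ((g * e : ℕ) : ℤ) := by
      simpa [he] using h3
    exact_mod_cast h4
  -- coprimality of c₁ and n₁
  have hcop₁ : Int.gcd c₁ (n₁:ℤ) = 1 := by
    have h1 := Int.gcd_div_gcd_div_gcd (i := c₀) (j := (N:ℤ)) (by rw [← he]; exact_mod_cast hepos)
    have h2 : c₀ / ↑(Int.gcd c₀ (N:ℤ)) = c₁ := by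
      rw [← he, hc₁]
      exact Int.mul_ediv_cancel_left c₁ hez
    have h3 : (N:ℤ) / ↑(Int.gcd c₀ (N:ℤ)) = (n₁:ℤ) := by
      rw [← he, hn₁def]
      push_cast [Int.natCast_ediv]
      rfl
    rwa [h2, h3] at h1
  obtain ⟨u, v, huv⟩ : IsCoprime c₁ (n₁:ℤ) := Int.isCoprime_iff_gcd_eq_one.mpr hcop₁
  have hcopc₀α : IsCoprime c₀ α := ⟨β, f₀, by linear_combination hdetU⟩
  -- find x coprime to e with n₁ ∣ c₁ x - α
  obtain ⟨k, hk⟩ := exists_coprime_lift (u * α) (n₁:ℤ) e (by exact_mod_cast hepos.ne') (by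
    intro pp hpp hppe hppr hppn
    have hp' : Prime (pp:ℤ) := Int.prime_iff_natAbs_prime.mpr (by simpa using hpp)
    rcases hp'.dvd_mul.mp hppr with h1 | h1
    · have hone : (pp:ℤ) ∣ 1 := by
        rw [← huv]
        exact dvd_add (h1.mul_right c₁) (hppn.mul_left v)
      exact hp'.not_dvd_one hone
    · have h2 : (pp:ℤ) ∣ c₀ := by
        rw [hc₁]
        exact Dvd.dvd.mul_right (by exact_mod_cast Int.natCast_dvd_natCast.mpr hppe) c₁
      exact hp'.not_unit (hcopc₀α.isUnit_of_dvd' h2 h1))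
  set x : ℤ := u * α + (n₁:ℤ) * k with hx
  have hn₁x : (n₁:ℤ) ∣ c₁ * x - α := by
    refine ⟨-(α * v) + c₁ * k, ?_⟩
    linear_combination α * huv
  have hcopxe : IsCoprime x (e:ℤ) := Int.isCoprime_iff_gcd_eq_one.mpr hk
  obtain ⟨f, y', hfy'⟩ := hcopxe
  set y : ℤ := -y' with hy
  have hfy : f * x - y * (e:ℤ) = 1 := by linear_combination hfy'
  -- σ
  set σ : SL(2,ℤ) := ⟨!![f, y; (e:ℤ), x], by rw [Matrix.det_fin_two_of]; linear_combination hfy⟩ with hσ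
  have hσ00 : (σ 0 0 : ℤ) = f := rfl
  have hσ10 : (σ 1 0 : ℤ) = (e:ℤ) := rfl
  have hσcoe : (σ : Matrix (Fin 2) (Fin 2) ℤ) = !![f, y; (e:ℤ), x] := rfl
  -- γ₁ = U σ⁻¹
  set σinv : Matrix (Fin 2) (Fin 2) ℤ := !![x, -y; -(e:ℤ), f] with hσinv
  have hdetγ₁ : (Umat * σinv).det = 1 := by
    rw [hUmat, hσinv, Matrix.det_mul, Matrix.det_fin_two_of, Matrix.det_fin_two_of]
    have h1 : f₀ * α - -β * c₀ = 1 := by linear_combination hdetU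
    have h2 : x * f - -y * -(e:ℤ) = 1 := by linear_combination hfy
    rw [h1, h2, mul_one]
  set γ₁ : SL(2,ℤ) := ⟨Umat * σinv, hdetγ₁⟩ with hγ₁
  obtain ⟨w₂, hw₂⟩ := hn₁x
  have hN' : (e:ℤ) * (n₁:ℤ) = (N:ℤ) := by exact_mod_cast congrArg (Nat.cast : ℕ → ℤ) hn₁
  have hγ₁mem : γ₁ ∈ CongruenceSubgroup.Gamma0 N := by
    rw [CongruenceSubgroup.Gamma0_mem]
    have hent : (Umat * σinv) 1 0 = c₀ * x + α * (-(e:ℤ)) := by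
      rw [hUmat, hσinv, Matrix.mul_fin_two]
      rfl
    have hdvd : (N:ℤ) ∣ (Umat * σinv) 1 0 := by
      rw [hent]
      refine ⟨w₂, ?_⟩
      linear_combination (e:ℤ) * hw₂ + x * hc₁ + w₂ * hN'
    have : ((γ₁ : SL(2,ℤ)) 1 0 : ℤ) = (Umat * σinv) 1 0 := rfl
    rw [this] at *
    exact_mod_cast (ZMod.intCast_zmod_eq_zero_iff_dvd _ N).mpr hdvd
  -- reduction of b₀ mod (he2 * d)
  set g₂ : ℕ := Nat.gcd (e^2) N with hg₂
  have hg₂dvdN : g₂ ∣ N := Nat.gcd_dvd_right _ _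
  have hg₂pos : 0 < g₂ := Nat.gcd_pos_of_pos_right _ hN
  set he2 : ℕ := N / g₂ with hhe2
  have hmulg₂ : g₂ * he2 = N := Nat.mul_div_cancel' hg₂dvdN
  have hhe2pos : 0 < he2 := Nat.div_pos (Nat.le_of_dvd hN hg₂dvdN) hg₂pos
  set e₂ : ℕ := e^2 / g₂ with he₂
  have hge₂ : g₂ * e₂ = e^2 := Nat.mul_div_cancel' (Nat.gcd_dvd_left _ _)
  have hNhe : he2 * e^2 = N * e₂ := by rw [← hge₂, ← hmulg₂]; ring
  set hd2 : ℕ := he2 * d with hhd2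
  have hd2pos : 0 < hd2 := Nat.mul_pos hhe2pos hdpos
  have hd2z : ((hd2:ℕ):ℤ) ≠ 0 := by exact_mod_cast hd2pos.ne'
  set bz : ℤ := b₀ % (hd2:ℤ) with hbzdef
  set j : ℤ := b₀ / (hd2:ℤ) with hjdef
  have hsplit : (hd2:ℤ) * j + bz = b₀ := Int.mul_ediv_add_emod b₀ _
  have hbznn : 0 ≤ bz := Int.emod_nonneg _ hd2z
  have hbzlt : bz < (hd2:ℤ) := Int.emod_lt_of_pos _ (by exact_mod_cast hd2pos)
  set b : ℕ := bz.toNat with hbdef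
  have hbz : (b:ℤ) = bz := Int.toNat_of_nonneg hbznn
  have hblt : b < hd2 := by
    have : (b:ℤ) < (hd2:ℤ) := by rw [hbz]; exact hbzlt
    exact_mod_cast this
  -- δ₂ = σ (1 t; 0 1) σ⁻¹
  set t : ℤ := (he2:ℤ) * j with ht
  set δ₂mat : Matrix (Fin 2) (Fin 2) ℤ :=
    !![1 - t*(e:ℤ)*f, t*(f*f); -(t*((e:ℤ)*(e:ℤ))), 1 + t*(e:ℤ)*f] with hδ₂mat
  have hdetδ₂ : δ₂mat.det = 1 := by rw [hδ₂mat, Matrix.det_fin_two_of]; ring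
  set δ₂ : SL(2,ℤ) := ⟨δ₂mat, hdetδ₂⟩ with hδ₂
  have hδ₂mem : δ₂ ∈ CongruenceSubgroup.Gamma0 N := by
    rw [CongruenceSubgroup.Gamma0_mem]
    have hdvd : (N:ℤ) ∣ δ₂mat 1 0 := by
      have hent : δ₂mat 1 0 = -(t*((e:ℤ)*(e:ℤ))) := rfl
      rw [hent]
      refine ⟨-(j * (e₂:ℤ)), ?_⟩
      have hNhe' : (he2:ℤ) * (e:ℤ)^2 = (N:ℤ) * (e₂:ℤ) := by exact_mod_cast congrArg (Nat.cast : ℕ → ℤ) hNhe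
      linear_combination -j * hNhe'
    have : ((δ₂ : SL(2,ℤ)) 1 0 : ℤ) = δ₂mat 1 0 := rfl
    rw [this] at *
    exact_mod_cast (ZMod.intCast_zmod_eq_zero_iff_dvd _ N).mpr hdvd
  -- assemble
  refine ⟨γ₁ * δ₂, Subgroup.mul_mem _ hγ₁mem hδ₂mem, σ, e, g, d, b, f, hσ00, hσ10, heN, hepos,
    ⟨x, -y, by linear_combination hfy⟩, ?_, hNge, ?_, ?_⟩
  · have h1 : ((g * d : ℕ) : ℤ) = (m:ℤ) := by push_cast; rw [hd]; exact hgd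
    exact_mod_cast h1
  · exact hblt
  · -- the matrix identity
    set R : Matrix (Fin 2) (Fin 2) ℤ := !![1, t; 0, 1] with hR
    set T : Matrix (Fin 2) (Fin 2) ℤ := !![(g:ℤ), (b:ℤ); 0, (d:ℤ)] with hT
    set σm : Matrix (Fin 2) (Fin 2) ℤ := !![f, y; (e:ℤ), x] with hσm
    have I1 : σinv * σm = 1 := by
      rw [hσinv, hσm, Matrix.mul_fin_two, Matrix.one_fin_two]
      apply Matrix.ext
      intro i jj
      fin_cases i <;> fin_cases jj <;>
        simp only [Matrix.cons_val', Matrix.cons_val_zero, Matrix.cons_val_one, Matrix.head_cons,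
          Matrix.head_fin_const, Matrix.empty_val', Matrix.cons_val_fin_one, Fin.zero_eta,
          Fin.mk_one, Matrix.of_apply]
      · linear_combination hfy
      · ring
      · ring
      · linear_combination hfy
    have I2 : δ₂mat * σm = σm * R := by
      rw [hδ₂mat, hσm, hR, Matrix.mul_fin_two, Matrix.mul_fin_two]
      apply Matrix.ext
      intro i jj
      fin_cases i <;> fin_cases jj <;>
        simp only [Matrix.cons_val', Matrix.cons_val_zero, Matrix.cons_val_one, Matrix.head_cons,
          Matrix.head_fin_const, Matrix.empty_val', Matrix.cons_val_fin_one, Fin.zero_eta,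
          Fin.mk_one, Matrix.of_apply]
      · ring
      · linear_combination t * f * hfy
      · ring
      · linear_combination t * (e:ℤ) * hfy
    have I3 : R * T = !![(g:ℤ), b₀; 0, dz] := by
      rw [hR, hT, Matrix.mul_fin_two]
      apply Matrix.ext
      intro i jj
      fin_cases i <;> fin_cases jj <;>
        simp only [Matrix.cons_val', Matrix.cons_val_zero, Matrix.cons_val_one, Matrix.head_cons,
          Matrix.head_fin_const, Matrix.empty_val', Matrix.cons_val_fin_one, Fin.zero_eta,
          Fin.mk_one, Matrix.of_apply]
      · ring
      · have hsplit' : (he2:ℤ) * (d:ℤ) * j + bz = b₀ := by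
          push_cast [hhd2] at hsplit
          linear_combination hsplit
        linear_combination hsplit' + hbz
      · ring
      · linear_combination hd
    have hγcoe : ((γ₁ * δ₂ : SL(2,ℤ)) : Matrix (Fin 2) (Fin 2) ℤ) = (Umat * σinv) * δ₂mat := by
      rw [Matrix.SpecialLinearGroup.coe_mul]
    rw [hγcoe, hσcoe, hAU]
    calc Umat * !![(g:ℤ), b₀; 0, dz]
        = Umat * ((σinv * σm) * (R * T)) := by rw [I1, I3, one_mul]
      _ = Umat * (σinv * (σm * (R * T))) := by rw [mul_assoc]
      _ = Umat * (σinv * ((σm * R) * T)) := by rw [mul_assoc σm]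
      _ = Umat * (σinv * ((δ₂mat * σm) * T)) := by rw [I2]
      _ = Umat * σinv * δ₂mat * σm * T := by simp only [mul_assoc]


lemma part2 (N m : ℕ) (hN : 0 < N) (hm : 0 < m)
    (σ σ' : SL(2, ℤ)) (e a d b e' a' d' b' : ℕ) (f f' : ℤ)
    (h : (σ 0 0 : ℤ) = f ∧ (σ 1 0 : ℤ) = e ∧ e ∣ N ∧ 0 < e ∧ IsCoprime f (e : ℤ) ∧
        a * d = m ∧ N ∣ a * e ∧ b < (N / Nat.gcd (e ^ 2) N) * d)
    (h' : (σ' 0 0 : ℤ) = f' ∧ (σ' 1 0 : ℤ) = e' ∧ e' ∣ N ∧ 0 < e' ∧ IsCoprime f' (e' : ℤ) ∧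
        a' * d' = m ∧ N ∣ a' * e' ∧ b' < (N / Nat.gcd (e' ^ 2) N) * d')
    (hco : ∃ δ ∈ CongruenceSubgroup.Gamma0 N,
        (σ : Matrix (Fin 2) (Fin 2) ℤ) * !![(a : ℤ), (b : ℤ); 0, (d : ℤ)] =
          (δ : Matrix (Fin 2) (Fin 2) ℤ) * (σ' : Matrix (Fin 2) (Fin 2) ℤ) *
            !![(a' : ℤ), (b' : ℤ); 0, (d' : ℤ)]) :
    e = e' ∧ a = a' ∧ d = d' ∧ f ≡ f' [ZMOD Nat.gcd e (N / e)] ∧ (σ = σ' → b = b') := by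
  obtain ⟨h1, h2, h3, h4, h5, h6, h7, h8⟩ := h
  obtain ⟨h1', h2', h3', h4', h5', h6', h7', h8'⟩ := h'
  obtain ⟨δ, hδmem, hE⟩ := hco
  -- positivity
  have hapos : 0 < a := by rcases Nat.eq_zero_or_pos a with h0 | h0; · subst h0; simp at h6; omega
                           · exact h0
  have hdpos : 0 < d := by rcases Nat.eq_zero_or_pos d with h0 | h0; · subst h0; simp at h6; omega
                           · exact h0
  have ha'pos : 0 < a' := by rcases Nat.eq_zero_or_pos a' with h0 | h0; · subst h0; simp at h6'; omega
                             · exact h0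
  have hd'pos : 0 < d' := by rcases Nat.eq_zero_or_pos d' with h0 | h0; · subst h0; simp at h6'; omega
                             · exact h0
  have hanz : (a:ℤ) ≠ 0 := by exact_mod_cast hapos.ne'
  have hdnz : (d:ℤ) ≠ 0 := by exact_mod_cast hdpos.ne'
  have henz : (e:ℤ) ≠ 0 := by exact_mod_cast h4.ne'
  -- names for entries
  set y : ℤ := σ 0 1 with hy
  set w₁ : ℤ := σ 1 1 with hw₁
  set y' : ℤ := σ' 0 1 with hy'
  set w₁' : ℤ := σ' 1 1 with hw₁'
  set xx : ℤ := δ 0 0 with hxx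
  set uu : ℤ := δ 0 1 with huu
  set nc : ℤ := δ 1 0 with hnc
  set ww : ℤ := δ 1 1 with hww
  have detσ : f * w₁ - y * (e:ℤ) = 1 := by
    have hh := σ.property
    rw [Matrix.det_fin_two] at hh
    rw [← h1, ← h2]; exact hh
  have detσ' : f' * w₁' - y' * (e':ℤ) = 1 := by
    have hh := σ'.property
    rw [Matrix.det_fin_two] at hh
    rw [← h1', ← h2']; exact hh
  have detδ : xx * ww - uu * nc = 1 := by
    have hh := δ.property
    rw [Matrix.det_fin_two] at hh
    exact hh
  have hNnc : (N:ℤ) ∣ nc := by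
    have := CongruenceSubgroup.Gamma0_mem.mp hδmem
    exact_mod_cast (ZMod.intCast_zmod_eq_zero_iff_dvd _ N).mp (by exact_mod_cast this)
  -- entry equations
  have E00 := congrFun (congrFun hE 0) 0
  have E10 := congrFun (congrFun hE 1) 0
  have E01 := congrFun (congrFun hE 0) 1
  have E11 := congrFun (congrFun hE 1) 1
  simp only [Matrix.mul_apply, Fin.sum_univ_two, Matrix.cons_val', Matrix.cons_val_zero,
    Matrix.cons_val_one, Matrix.head_cons, Matrix.head_fin_const, Matrix.empty_val',
    Matrix.cons_val_fin_one, Matrix.of_apply, h1, h2, h1', h2', ← hy, ← hw₁, ← hy', ← hw₁',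
    ← hxx, ← huu, ← hnc, ← hww, mul_zero, add_zero, zero_mul, mul_one] at E00 E10 E01 E11
  -- Step 1 : a = a'
  have hfa' : f' * (a':ℤ) = ww * (f * a) - uu * ((e:ℤ) * a) := by
    linear_combination -ww * E00 + uu * E10 - (f' * (a':ℤ)) * detδ
  have hea' : (e':ℤ) * (a':ℤ) = xx * ((e:ℤ) * a) - nc * (f * a) := by
    linear_combination -xx * E10 + nc * E00 - ((e':ℤ) * (a':ℤ)) * detδ
  have hadvd : (a:ℤ) ∣ (a':ℤ) := by
    have d1 : (a:ℤ) ∣ f' * a' := ⟨ww * f - uu * e, by linear_combination hfa'⟩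
    have d2 : (a:ℤ) ∣ (e':ℤ) * a' := ⟨xx * e - nc * f, by linear_combination hea'⟩
    have d3 : (a:ℤ) ∣ (Int.gcd (f' * (a':ℤ)) ((e':ℤ) * (a':ℤ)) : ℤ) := Int.dvd_coe_gcd d1 d2
    rwa [Int.gcd_mul_right, Int.isCoprime_iff_gcd_eq_one.mp h5', one_mul, Int.natAbs_natCast] at d3
  have ha'dvd : (a':ℤ) ∣ (a:ℤ) := by
    have d1 : (a':ℤ) ∣ f * a := ⟨xx * f' + uu * e', by linear_combination E00⟩
    have d2 : (a':ℤ) ∣ (e:ℤ) * a := ⟨nc * f' + ww * e', by linear_combination E10⟩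
    have d3 : (a':ℤ) ∣ (Int.gcd (f * (a:ℤ)) ((e:ℤ) * (a:ℤ)) : ℤ) := Int.dvd_coe_gcd d1 d2
    rwa [Int.gcd_mul_right, Int.isCoprime_iff_gcd_eq_one.mp h5, one_mul, Int.natAbs_natCast] at d3
  have haa : a = a' := Nat.dvd_antisymm (Int.natCast_dvd_natCast.mp hadvd)
    (Int.natCast_dvd_natCast.mp ha'dvd)
  have hdd : d = d' := by
    have hmm : a * d = a * d' := by rw [h6, haa, h6']
    exact Nat.eq_of_mul_eq_mul_left hapos hmm
  have ha' : ((a':ℕ):ℤ) = (a:ℤ) := by exact_mod_cast congrArg (Nat.cast : ℕ → ℤ) haa.symm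
  -- Step 2 : e = e'
  have heeq : (e:ℤ) = nc * f' + ww * e' := by
    apply mul_right_cancel₀ hanz
    linear_combination E10 + (nc * f' + ww * (e':ℤ)) * ha'
  have he'eq : (e':ℤ) = xx * e - nc * f := by
    apply mul_right_cancel₀ hanz
    linear_combination hea' - (e':ℤ) * ha'
  have heNz : (e:ℤ) ∣ (N:ℤ) := by exact_mod_cast h3
  have he'Nz : (e':ℤ) ∣ (N:ℤ) := by exact_mod_cast h3'
  have hedvd : (e:ℤ) ∣ (e':ℤ) := by
    rw [he'eq]
    exact dvd_sub (Dvd.dvd.mul_left dvd_rfl xx) ((heNz.trans hNnc).mul_right f)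
  have he'dvd : (e':ℤ) ∣ (e:ℤ) := by
    rw [heeq]
    exact dvd_add ((he'Nz.trans hNnc).mul_right f') (Dvd.dvd.mul_left dvd_rfl ww)
  have hee : e = e' := Nat.dvd_antisymm (Int.natCast_dvd_natCast.mp hedvd)
    (Int.natCast_dvd_natCast.mp he'dvd)
  have hee' : ((e':ℕ):ℤ) = (e:ℤ) := by exact_mod_cast congrArg (Nat.cast : ℕ → ℤ) hee.symm
  -- Step 3 : congruence for f
  set gg : ℕ := Nat.gcd e (N / e) with hggdef
  obtain ⟨z, hz⟩ := hNnc
  set n₁ : ℕ := N / e with hn₁def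
  have hn₁e : e * n₁ = N := Nat.mul_div_cancel' h3
  have hn₁z : (e:ℤ) * (n₁:ℤ) = (N:ℤ) := by exact_mod_cast congrArg (Nat.cast : ℕ → ℤ) hn₁e
  have hfeq : f = xx * f' + uu * e' := by
    apply mul_right_cancel₀ hanz
    linear_combination E00 + (xx * f' + uu * (e':ℤ)) * ha'
  have h1w : 1 - ww = (n₁:ℤ) * (z * f') := by
    apply mul_left_cancel₀ henz
    linear_combination heeq + f' * hz - (z * f') * hn₁z + ww * hee'
  have hggn₁ : (gg:ℤ) ∣ (n₁:ℤ) := by exact_mod_cast Nat.gcd_dvd_right e n₁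
  have hgge : (gg:ℤ) ∣ (e:ℤ) := by exact_mod_cast Nat.gcd_dvd_left e n₁
  have hggN : (gg:ℤ) ∣ (N:ℤ) := hgge.trans heNz
  have hggw : (gg:ℤ) ∣ 1 - ww := by rw [h1w]; exact hggn₁.mul_right (z * f')
  have hx1 : (gg:ℤ) ∣ xx - 1 := by
    have hid : xx - 1 = xx * (1 - ww) + uu * nc := by linear_combination detδ
    rw [hid]
    exact dvd_add (hggw.mul_left xx) ((hggN.trans ⟨z, hz⟩).mul_left uu)
  have hggdvd : (gg:ℤ) ∣ f' - f := by
    have hid2 : f' - f = -(f' * (xx - 1)) - uu * (e':ℤ) := by linear_combination -hfeq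
    rw [hid2]
    refine dvd_sub (dvd_neg.mpr (hx1.mul_left f')) ?_
    rw [hee']
    exact hgge.mul_left uu
  have hcong : f ≡ f' [ZMOD (gg:ℕ)] := Int.modEq_iff_dvd.mpr hggdvd
  refine ⟨hee, haa, hdd, hcong, ?_⟩
  -- Step 4 : b = b' when σ = σ'
  intro hσσ'
  have hff : f' = f := by rw [← h1, ← h1', hσσ']
  have hyy : y' = y := by rw [hy', hy, hσσ']
  have hww₁ : w₁' = w₁ := by rw [hw₁', hw₁, hσσ']
  have hdd' : ((d':ℕ):ℤ) = (d:ℤ) := by exact_mod_cast congrArg (Nat.cast : ℕ → ℤ) hdd.symm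
  rw [hff, hyy, hww₁, hee', hdd'] at E01 E11
  rw [hff, hee'] at hfeq heeq
  obtain ⟨P, Q, hPQ⟩ := h5
  have F1 : f * ((b:ℤ) - b') = (d:ℤ) * (xx*y + uu*w₁ - y) := by
    linear_combination E01 - (b':ℤ) * hfeq
  have F2 : (e:ℤ) * ((b:ℤ) - b') = (d:ℤ) * (nc*y + ww*w₁ - w₁) := by
    linear_combination E11 - (b':ℤ) * heeq
  obtain ⟨tt, htt⟩ : ∃ tt : ℤ, (b:ℤ) - b' = (d:ℤ) * tt :=
    ⟨P*(xx*y + uu*w₁ - y) + Q*(nc*y + ww*w₁ - w₁),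
      by linear_combination P * F1 + Q * F2 - ((b:ℤ) - (b':ℤ)) * hPQ⟩
  have het : (e:ℤ) * tt = nc*y + ww*w₁ - w₁ := by
    apply mul_left_cancel₀ hdnz
    linear_combination F2 - (e:ℤ) * htt
  have key : (e:ℤ)^2 * tt = -nc := by
    linear_combination (e:ℤ) * het - w₁ * heeq - nc * detσ
  -- N ∣ e² t  forces  (N/gcd(e²,N)) ∣ t
  set g₂ : ℕ := Nat.gcd (e^2) N with hg₂def
  have hg₂pos : 0 < g₂ := Nat.gcd_pos_of_pos_right _ hN
  have hg₂nz : ((g₂:ℕ):ℤ) ≠ 0 := by exact_mod_cast hg₂pos.ne'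
  set h₂ : ℕ := N / g₂ with hh₂def
  set ee₂ : ℕ := e^2 / g₂ with hee₂def
  have hg₂h₂ : g₂ * h₂ = N := Nat.mul_div_cancel' (Nat.gcd_dvd_right _ _)
  have hg₂e₂ : g₂ * ee₂ = e^2 := Nat.mul_div_cancel' (Nat.gcd_dvd_left _ _)
  have hcop2 : Nat.Coprime ee₂ h₂ := Nat.coprime_div_gcd_div_gcd hg₂pos
  have hg₂h₂z : ((g₂:ℕ):ℤ) * (h₂:ℤ) = (N:ℤ) := by exact_mod_cast congrArg (Nat.cast : ℕ → ℤ) hg₂h₂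
  have hg₂e₂z : ((g₂:ℕ):ℤ) * (ee₂:ℤ) = ((e:ℤ))^2 := by
    have := congrArg (Nat.cast : ℕ → ℤ) hg₂e₂
    push_cast at this
    exact this
  have hs : ∃ s : ℤ, (ee₂:ℤ) * tt = (h₂:ℤ) * s := by
    refine ⟨-z, ?_⟩
    apply mul_left_cancel₀ hg₂nz
    linear_combination key + tt * hg₂e₂z + z * hg₂h₂z - hz
  obtain ⟨s, hs⟩ := hs
  have hcopz : IsCoprime (h₂:ℤ) (ee₂:ℤ) := by
    rw [Int.isCoprime_iff_gcd_eq_one]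
    simpa [Int.gcd_natCast_natCast] using (Nat.coprime_comm.mp hcop2)
  have hdvdtt : (h₂:ℤ) ∣ tt := hcopz.dvd_of_dvd_mul_left ⟨s, by linear_combination hs⟩
  have hdvdbb : ((h₂ * d : ℕ):ℤ) ∣ (b:ℤ) - b' := by
    obtain ⟨s2, hs2⟩ := hdvdtt
    refine ⟨s2, ?_⟩
    push_cast
    rw [htt, hs2]
    ring
  have hblt2 : b < h₂ * d := h8
  have hblt2' : b' < h₂ * d := by
    have := h8'
    rw [← hee, ← hdd] at this
    exact this
  have habs : |(b:ℤ) - b'| < ((h₂ * d : ℕ):ℤ) := by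
    rw [abs_lt]
    constructor
    · have h1n : (b':ℤ) < ((h₂ * d : ℕ):ℤ) := by exact_mod_cast hblt2'
      have : (0:ℤ) ≤ (b:ℤ) := by positivity
      linarith
    · have h1n : (b:ℤ) < ((h₂ * d : ℕ):ℤ) := by exact_mod_cast hblt2
      have : (0:ℤ) ≤ (b':ℤ) := by positivity
      linarith
  have hz2 : (b:ℤ) - b' = 0 := Int.eq_zero_of_abs_lt_dvd hdvdbb habs
  omega

/-- A complete set of coset representatives of `Γ₀(N)\M_N(m)` (where
`M_N(m)` is the set of integral `2×2` matrices of determinant `m` whose lower-left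
entry is divisible by `N`) is given by the matrices `M_{f/e}·(a b; 0 d)`, where
`f/e` runs over the cusps of `Γ₀(N)` (`e ∣ N`, `gcd(e,f) = 1`, `f mod gcd(e, N/e)`),
`M_{f/e} ∈ SL₂(ℤ)` has first column `(f, e)`, `ad = m` with `ae ≡ 0 mod N`, and
`b` runs mod `h_e·d` with `h_e = N/gcd(e², N)`. -/
theorem Gamma0_MNm_coset_decomposition (N m : ℕ) (hN : 0 < N) (hm : 0 < m) :
    -- every element of `M_N(m)` lies in one of these cosets
    (∀ A : Matrix (Fin 2) (Fin 2) ℤ, A.det = m → (N : ℤ) ∣ A 1 0 →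
      ∃ γ ∈ CongruenceSubgroup.Gamma0 N, ∃ σ : SL(2, ℤ), ∃ e a d b : ℕ, ∃ f : ℤ,
        (σ 0 0 : ℤ) = f ∧ (σ 1 0 : ℤ) = e ∧ e ∣ N ∧ 0 < e ∧ IsCoprime f (e : ℤ) ∧
        a * d = m ∧ N ∣ a * e ∧ b < (N / Nat.gcd (e ^ 2) N) * d ∧
        A = (γ : Matrix (Fin 2) (Fin 2) ℤ) * (σ : Matrix (Fin 2) (Fin 2) ℤ) *
              !![(a : ℤ), (b : ℤ); 0, (d : ℤ)]) ∧
    -- distinct parameters give distinct cosets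
    (∀ (σ σ' : SL(2, ℤ)) (e a d b e' a' d' b' : ℕ) (f f' : ℤ),
      ((σ 0 0 : ℤ) = f ∧ (σ 1 0 : ℤ) = e ∧ e ∣ N ∧ 0 < e ∧ IsCoprime f (e : ℤ) ∧
        a * d = m ∧ N ∣ a * e ∧ b < (N / Nat.gcd (e ^ 2) N) * d) →
      ((σ' 0 0 : ℤ) = f' ∧ (σ' 1 0 : ℤ) = e' ∧ e' ∣ N ∧ 0 < e' ∧ IsCoprime f' (e' : ℤ) ∧
        a' * d' = m ∧ N ∣ a' * e' ∧ b' < (N / Nat.gcd (e' ^ 2) N) * d') →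
      (∃ δ ∈ CongruenceSubgroup.Gamma0 N,
        (σ : Matrix (Fin 2) (Fin 2) ℤ) * !![(a : ℤ), (b : ℤ); 0, (d : ℤ)] =
          (δ : Matrix (Fin 2) (Fin 2) ℤ) * (σ' : Matrix (Fin 2) (Fin 2) ℤ) *
            !![(a' : ℤ), (b' : ℤ); 0, (d' : ℤ)]) →
      e = e' ∧ a = a' ∧ d = d' ∧ f ≡ f' [ZMOD Nat.gcd e (N / e)] ∧ (σ = σ' → b = b')) := by
  exact ⟨fun A hdet hq => part1 N m hN hm A hdet hq,
    fun σ σ' e a d b e' a' d' b' f f' h h' hco => part2 N m hN hm σ σ' e a d b e' a' d' b' f f' h h' hco⟩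
end

section
/- SL₂(Z) decomposes as the disjoint union over cusps f/e of Γ₀(N) and 0 ≤ a ≤ h_e − 1 of the cosets Γ₀(N)·M_{f/e}·(1 a; 0 1), where h_e = N/gcd(e², N) is the width of the cusp f/e and M_{f/e} ∈ SL₂(Z) has first column (f, e). -/
open scoped MatrixGroups
open Matrix

/-- In an arithmetic progression with coprime parameters there is an element
coprime to any fixed nonzero modulus (ℕ version, after Mathlib's
`ZMod.unitsMap_surjective`). -/
private lemma nat_coprime_in_progression (m : ℕ) (hm : m ≠ 0) (x n : ℕ)
    (hx : x.Coprime n) : ∃ k : ℕ, (x + k * n).Coprime m := by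
  let ps := m.primeFactors.filter (fun p ↦ ¬p ∣ x)
  use ps.prod id
  apply Nat.coprime_of_dvd
  intro p pp hp hpn
  by_cases hpx : p ∣ x
  · have h := Nat.dvd_sub hp hpx
    rw [add_comm, Nat.add_sub_cancel] at h
    rcases pp.dvd_mul.mp h with h | h
    · have ⟨q, hq, hq'⟩ := (pp.prime.dvd_finset_prod_iff id).mp h
      rw [Finset.mem_filter, Nat.mem_primeFactors,
        ← (Nat.prime_dvd_prime_iff_eq pp hq.1.1).mp hq'] at hq
      exact hq.2 hpx
    · exact Nat.Prime.not_coprime_iff_dvd.mpr ⟨p, pp, hpx, h⟩ hx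
  · have pps : p ∈ ps := Finset.mem_filter.mpr ⟨Nat.mem_primeFactors.mpr ⟨pp, hpn, hm⟩, hpx⟩
    have h := Nat.dvd_sub hp ((Finset.dvd_prod_of_mem id pps).mul_right n)
    rw [Nat.add_sub_cancel] at h
    contradiction

/-- ℤ version. -/
private lemma int_coprime_in_progression (a b : ℤ) (n : ℕ) (hn : n ≠ 0)
    (hab : IsCoprime a b) (hb : b ≠ 0) : ∃ k : ℤ, IsCoprime (a + k * b) (n : ℤ) := by
  set m : ℕ := b.natAbs with hmdef
  have hm0 : m ≠ 0 := Int.natAbs_ne_zero.mpr hb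
  have hmz : (m : ℤ) ≠ 0 := by exact_mod_cast hm0
  -- a is coprime to m
  have ham : IsCoprime a (m : ℤ) := by
    rcases Int.natAbs_eq b with h | h
    · rwa [← h]
    · rw [h] at hab; exact (IsCoprime.neg_right_iff a (m:ℤ)).mp hab
  -- pass to residue x = a % m
  have hxnn : 0 ≤ a % (m : ℤ) := Int.emod_nonneg a hmz
  set x : ℕ := (a % (m : ℤ)).toNat with hxdef
  have hxcast : (x : ℤ) = a % (m : ℤ) := Int.toNat_of_nonneg hxnn
  have hxm : IsCoprime (x : ℤ) (m : ℤ) := by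
    have : a % (m:ℤ) + (m:ℤ) * (a / m) = a := Int.emod_add_mul_ediv a m
    have h2 : IsCoprime (a % (m:ℤ) + (m:ℤ) * (a / m)) (m : ℤ) := by rwa [this]
    rw [hxcast]
    exact IsCoprime.of_add_mul_left_left h2
  have hxm' : x.Coprime m := Nat.isCoprime_iff_coprime.mp hxm
  obtain ⟨K, hK⟩ := nat_coprime_in_progression n hn x m hxm'
  have key : IsCoprime ((x : ℤ) + K * m) (n : ℤ) := by
    have := Nat.isCoprime_iff_coprime.mpr hK
    push_cast at this
    exact this
  have hxa : (x : ℤ) = a - (m:ℤ) * (a / m) := by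
    rw [hxcast, Int.emod_def]
  rcases Int.natAbs_eq b with h | h
  · refine ⟨(K - a / m), ?_⟩
    have : a + (K - a / m) * b = (x : ℤ) + K * m := by
      rw [hxa, ← h]; ring
    rwa [this]
  · refine ⟨-(K - a / m), ?_⟩
    have : a + (-(K - a / m)) * b = (x : ℤ) + K * m := by
      have hb' : b = -(m : ℤ) := by rw [hmdef]; exact_mod_cast h
      rw [hxa, hb']; ring
    rwa [this]

/-- For coprime `p q`, there is a bottom row `(C, D)` of a `Γ₀(N)` matrix
with `C * p + D * q` a positive divisor of `N`. -/
private lemma exists_gamma0_row (N : ℕ) (hN : 0 < N) (p q : ℤ) (hpq : IsCoprime p q) :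
    ∃ (C D : ℤ) (e : ℕ), (N : ℤ) ∣ C ∧ IsCoprime C D ∧ C * p + D * q = (e : ℤ) ∧
      0 < e ∧ e ∣ N := by
  by_cases hp : p = 0
  · have hq : IsUnit q := isCoprime_zero_left.mp (hp ▸ hpq)
    refine ⟨0, q, 1, dvd_zero _, isCoprime_zero_left.mpr hq, ?_, one_pos, one_dvd N⟩
    rcases Int.isUnit_iff.mp hq with h | h <;> simp [hp, h]
  · have hNne : (N : ℤ) ≠ 0 := by exact_mod_cast hN.ne'
    have hNp : (N : ℤ) * p ≠ 0 := mul_ne_zero hNne hp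
    set d : ℕ := Int.gcd q ((N : ℤ) * p) with hd
    have hd0 : 0 < d := Int.gcd_pos_of_ne_zero_right q hNp
    have hdz : (d : ℤ) ≠ 0 := by exact_mod_cast hd0.ne'
    have hdq : (d : ℤ) ∣ q := Int.gcd_dvd_left q ((N : ℤ) * p)
    have hdNp : (d : ℤ) ∣ (N : ℤ) * p := Int.gcd_dvd_right q ((N : ℤ) * p)
    -- d divides N
    have hdp : IsCoprime (d : ℤ) p := ((hpq.symm).of_isCoprime_of_dvd_left hdq)
    have hdN : d ∣ N := by
      have : (d : ℤ) ∣ (N : ℤ) := hdp.dvd_of_dvd_mul_right hdNp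
      exact_mod_cast this
    -- Bézout
    set D₀ : ℤ := Int.gcdA q ((N : ℤ) * p) with hD₀
    set B₀ : ℤ := Int.gcdB q ((N : ℤ) * p) with hB₀
    have hbez : (d : ℤ) = q * D₀ + ((N : ℤ) * p) * B₀ := Int.gcd_eq_gcd_ab q ((N : ℤ) * p)
    set s₁ : ℤ := ((N : ℤ) * p) / d with hs₁
    set s₂ : ℤ := q / d with hs₂
    have hds₁ : (d : ℤ) * s₁ = (N : ℤ) * p := Int.mul_ediv_cancel' hdNp
    have hds₂ : (d : ℤ) * s₂ = q := Int.mul_ediv_cancel' hdq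
    have hs₁ne : s₁ ≠ 0 := by
      intro h; rw [h, mul_zero] at hds₁; exact hNp hds₁.symm
    have hunit : B₀ * s₁ + D₀ * s₂ = 1 := by
      have : (d : ℤ) * (B₀ * s₁ + D₀ * s₂) = (d : ℤ) * 1 := by
        rw [mul_one, mul_add, show (d:ℤ) * (B₀ * s₁) = B₀ * ((d:ℤ) * s₁) by ring,
          show (d:ℤ) * (D₀ * s₂) = D₀ * ((d:ℤ) * s₂) by ring, hds₁, hds₂]
        linarith [hbez]
      exact mul_left_cancel₀ hdz this
    have hcop : IsCoprime D₀ s₁ := ⟨s₂, B₀, by linarith [hunit]⟩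
    obtain ⟨k, hk⟩ := int_coprime_in_progression D₀ s₁ N hN.ne' hcop hs₁ne
    refine ⟨(N : ℤ) * (B₀ - k * s₂), D₀ + k * s₁, d, Dvd.intro _ rfl, ?_, ?_, hd0, hdN⟩
    · have h1 : IsCoprime ((N : ℤ)) (D₀ + k * s₁) := hk.symm
      have h2 : IsCoprime (B₀ - k * s₂) (D₀ + k * s₁) :=
        ⟨s₁, s₂, by ring_nf; linarith [hunit]⟩
      exact h1.mul_left h2
    · have key : (d : ℤ) * (((N : ℤ) * (B₀ - k * s₂)) * p + (D₀ + k * s₁) * q)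
          = (d : ℤ) * (d : ℤ) := by
        linear_combination (k * q) * hds₁ - ((N : ℤ) * p * k) * hds₂ - (d : ℤ) * hbez
      exact mul_left_cancel₀ hdz key

private lemma entry10 (σ σ' δ : SL(2, ℤ)) (k : ℤ)
    (hδ : δ = σ * ModularGroup.T ^ k * σ'⁻¹) :
    (δ 1 0 : ℤ) = σ 1 0 * σ' 1 1 - (σ 1 0 * k + σ 1 1) * σ' 1 0 := by
  have h : (δ : Matrix (Fin 2) (Fin 2) ℤ)
      = (σ : Matrix (Fin 2) (Fin 2) ℤ) * !![1, k; 0, 1] * (σ'⁻¹ : SL(2, ℤ)) := by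
    rw [hδ]
    simp [Matrix.SpecialLinearGroup.coe_mul, ModularGroup.coe_T_zpow]
  rw [Matrix.SpecialLinearGroup.coe_inv, Matrix.adjugate_fin_two] at h
  have := congrFun (congrFun h 1) 0
  simp [Matrix.mul_apply, Fin.sum_univ_succ] at this
  rw [this]; ring

/-- `SL₂(ℤ)` decomposes as the disjoint union, over the cusps `f/e` of `Γ₀(N)`
(`e ∣ N`, `gcd(e,f)=1`, `f mod gcd(e, N/e)`) and `0 ≤ a ≤ h_e − 1` with
`h_e = N/gcd(e², N)`, of the cosets `Γ₀(N)·M_{f/e}·(1 a; 0 1)`, where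
`M_{f/e} ∈ SL₂(ℤ)` has first column `(f, e)`. -/
theorem SL2Z_coset_decomposition_Gamma0 (N : ℕ) (hN : 0 < N) :
    -- every element of `SL₂(ℤ)` lies in one of these cosets
    (∀ g : SL(2, ℤ),
      ∃ γ ∈ CongruenceSubgroup.Gamma0 N, ∃ σ : SL(2, ℤ), ∃ e a : ℕ, ∃ f : ℤ,
        (σ 0 0 : ℤ) = f ∧ (σ 1 0 : ℤ) = e ∧ e ∣ N ∧ 0 < e ∧ IsCoprime f (e : ℤ) ∧
        a < N / Nat.gcd (e ^ 2) N ∧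
        g = γ * σ * ModularGroup.T ^ a) ∧
    -- distinct parameters give distinct cosets
    (∀ (σ σ' : SL(2, ℤ)) (e a e' a' : ℕ) (f f' : ℤ),
      ((σ 0 0 : ℤ) = f ∧ (σ 1 0 : ℤ) = e ∧ e ∣ N ∧ 0 < e ∧ IsCoprime f (e : ℤ) ∧
        a < N / Nat.gcd (e ^ 2) N) →
      ((σ' 0 0 : ℤ) = f' ∧ (σ' 1 0 : ℤ) = e' ∧ e' ∣ N ∧ 0 < e' ∧ IsCoprime f' (e' : ℤ) ∧
        a' < N / Nat.gcd (e' ^ 2) N) →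
      (∃ δ ∈ CongruenceSubgroup.Gamma0 N,
        σ * ModularGroup.T ^ a = δ * (σ' * ModularGroup.T ^ a')) →
      e = e' ∧ f ≡ f' [ZMOD Nat.gcd e (N / e)] ∧ (σ = σ' → a = a')) := by
  constructor
  · -- existence
    intro g
    have hdetg : g 0 0 * g 1 1 - g 0 1 * g 1 0 = 1 := by
      have := g.2; rwa [Matrix.det_fin_two] at this
    have hpq : IsCoprime (g 0 0) (g 1 0) := ⟨g 1 1, -(g 0 1), by linarith⟩
    obtain ⟨C, D, e, hNC, hCD, hsum, he0, heN⟩ := exists_gamma0_row N hN _ _ hpq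
    obtain ⟨u, v, huv⟩ := hCD
    set τ : SL(2, ℤ) := ⟨!![v, -u; C, D], by
      rw [Matrix.det_fin_two_of]; linear_combination huv⟩ with hτ
    have hτmem : τ ∈ CongruenceSubgroup.Gamma0 N := by
      rw [CongruenceSubgroup.Gamma0_mem]
      have : (τ 1 0 : ℤ) = C := by simp [hτ]
      rw [this]
      exact (ZMod.intCast_zmod_eq_zero_iff_dvd C N).mpr hNC
    set σ : SL(2, ℤ) := τ * g with hσ
    have hσ10 : (σ 1 0 : ℤ) = (e : ℤ) := by
      have : (σ : Matrix (Fin 2) (Fin 2) ℤ) 1 0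
          = τ 1 0 * g 0 0 + τ 1 1 * g 1 0 := by
        simp [hσ, Matrix.SpecialLinearGroup.coe_mul, Matrix.mul_apply, Fin.sum_univ_succ]
      rw [this]
      have h1 : (τ 1 0 : ℤ) = C := by simp [hτ]
      have h2 : (τ 1 1 : ℤ) = D := by simp [hτ]
      rw [h1, h2, ← hsum]
    have hdetσ : σ 0 0 * σ 1 1 - σ 0 1 * σ 1 0 = 1 := by
      have := σ.2; rwa [Matrix.det_fin_two] at this
    refine ⟨τ⁻¹, inv_mem hτmem, σ, e, 0, σ 0 0, rfl, hσ10, heN, he0, ?_, ?_, ?_⟩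
    · exact ⟨σ 1 1, -(σ 0 1), by rw [← hσ10]; linarith⟩
    · exact Nat.div_pos (Nat.le_of_dvd hN (Nat.gcd_dvd_right _ _))
        (Nat.gcd_pos_of_pos_right _ hN)
    · rw [hσ]; group
  · rintro σ σ' e a e' a' f f' ⟨hf, he, heN, he0, hcopf, ha⟩
      ⟨hf', he', heN', he0', hcopf', ha'⟩ ⟨δ, hδmem, hδeq⟩
    have heZ : (0:ℤ) < (e:ℤ) := by exact_mod_cast he0
    set k : ℤ := (a : ℤ) - (a' : ℤ) with hk
    have hδ : δ = σ * ModularGroup.T ^ k * σ'⁻¹ := by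
      have h1 : ModularGroup.T ^ k
          = ModularGroup.T ^ (a : ℕ) * (ModularGroup.T ^ (a' : ℕ))⁻¹ := by
        rw [hk, _root_.zpow_sub, zpow_natCast, zpow_natCast]
      have h2 : δ = (σ * ModularGroup.T ^ a) * (σ' * ModularGroup.T ^ a')⁻¹ := by
        rw [hδeq]; group
      rw [h2, h1]; group
    have hδinv : δ⁻¹ = σ' * ModularGroup.T ^ (-k) * σ⁻¹ := by
      rw [hδ]; group
    have h10 := entry10 σ σ' δ k hδ
    have h10' := entry10 σ' σ δ⁻¹ (-k) hδinv
    rw [he, he'] at h10 h10'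
    have hNd : (N : ℤ) ∣ (δ 1 0 : ℤ) :=
      (ZMod.intCast_zmod_eq_zero_iff_dvd _ N).mp (CongruenceSubgroup.Gamma0_mem.mp hδmem)
    have hNd' : (N : ℤ) ∣ (δ⁻¹ 1 0 : ℤ) :=
      (ZMod.intCast_zmod_eq_zero_iff_dvd _ N).mp
        (CongruenceSubgroup.Gamma0_mem.mp (inv_mem hδmem))
    -- determinant identities
    have hdet : f * σ 1 1 - σ 0 1 * (e : ℤ) = 1 := by
      have := σ.2; rw [Matrix.det_fin_two] at this; rw [← hf, ← he]; exact this
    have hdet' : f' * σ' 1 1 - σ' 0 1 * (e' : ℤ) = 1 := by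
      have := σ'.2; rw [Matrix.det_fin_two] at this; rw [← hf', ← he']; exact this
    -- e' ∣ e
    have hcop1 : IsCoprime ((e' : ℤ)) (σ' 1 1) := ⟨-(σ' 0 1), f', by linarith⟩
    have hdvd1 : (e' : ℤ) ∣ (e : ℤ) * σ' 1 1 := by
      have h2 : (e : ℤ) * σ' 1 1
          = (δ 1 0 : ℤ) + ((e : ℤ) * k + σ 1 1) * (e' : ℤ) := by rw [h10]; ring
      rw [h2]
      exact dvd_add (dvd_trans (Int.natCast_dvd_natCast.mpr heN') hNd) (dvd_mul_left _ _)
    have he'e : (e' : ℤ) ∣ (e : ℤ) := hcop1.dvd_of_dvd_mul_right hdvd1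
    -- e ∣ e'
    have hcop2 : IsCoprime ((e : ℤ)) (σ 1 1) := ⟨-(σ 0 1), f, by linarith⟩
    have hdvd2 : (e : ℤ) ∣ (e' : ℤ) * σ 1 1 := by
      have h2 : (e' : ℤ) * σ 1 1
          = (δ⁻¹ 1 0 : ℤ) + ((e' : ℤ) * (-k) + σ' 1 1) * (e : ℤ) := by rw [h10']; ring
      rw [h2]
      exact dvd_add (dvd_trans (Int.natCast_dvd_natCast.mpr heN) hNd') (dvd_mul_left _ _)
    have hee' : (e : ℤ) ∣ (e' : ℤ) := hcop2.dvd_of_dvd_mul_right hdvd2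
    have heq : e = e' :=
      Nat.dvd_antisymm (Int.natCast_dvd_natCast.mp hee') (Int.natCast_dvd_natCast.mp he'e)
    refine ⟨heq, ?_, ?_⟩
    · -- f ≡ f' mod gcd(e, N/e)
      subst heq
      set m : ℕ := Nat.gcd e (N / e) with hm
      have hNe : (N : ℤ) = (e : ℤ) * ((N / e : ℕ) : ℤ) := by
        exact_mod_cast (Nat.mul_div_cancel' heN).symm
      have hstep : ((N / e : ℕ) : ℤ) ∣ (σ' 1 1 - σ 1 1 - (e : ℤ) * k) := by
        have h3 : (e : ℤ) * ((N / e : ℕ) : ℤ) ∣ (e : ℤ) * (σ' 1 1 - σ 1 1 - (e : ℤ) * k) := by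
          rw [← hNe]
          have h4 : (e : ℤ) * (σ' 1 1 - σ 1 1 - (e : ℤ) * k) = (δ 1 0 : ℤ) := by
            rw [h10]; ring
          rw [h4]; exact hNd
        exact (mul_dvd_mul_iff_left heZ.ne').mp h3
      have hme : (m : ℤ) ∣ (e : ℤ) := Int.natCast_dvd_natCast.mpr (Nat.gcd_dvd_left _ _)
      have hmNe : (m : ℤ) ∣ ((N / e : ℕ) : ℤ) :=
        Int.natCast_dvd_natCast.mpr (Nat.gcd_dvd_right _ _)
      have hmd : (m : ℤ) ∣ σ' 1 1 - σ 1 1 := by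
        have h5 := dvd_trans hmNe hstep
        have h6 : σ' 1 1 - σ 1 1 = (σ' 1 1 - σ 1 1 - (e : ℤ) * k) + (e : ℤ) * k := by ring
        rw [h6]; exact dvd_add h5 (hme.mul_right k)
      have hff : (m : ℤ) ∣ f' - f := by
        have h7 : f' - f = f * f' * (σ 1 1 - σ' 1 1)
            + (f * (σ' 0 1) - f' * (σ 0 1)) * (e : ℤ) := by
          linear_combination f * hdet' - f' * hdet
        rw [h7]
        exact dvd_add ((dvd_sub_comm.mp hmd).mul_left _) (hme.mul_left _)
      exact Int.modEq_iff_dvd.mpr hff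
    · -- σ = σ' → a = a'
      intro hσσ'
      subst hσσ'
      subst heq
      have h9 : ((e : ℤ)) ^ 2 * k = -(δ 1 0 : ℤ) := by rw [h10]; ring
      have hNk : (N : ℤ) ∣ ((e : ℤ)) ^ 2 * k := by rw [h9]; exact hNd.neg_right
      set g : ℕ := Nat.gcd (e ^ 2) N with hg
      have hg0 : 0 < g := Nat.gcd_pos_of_pos_right _ hN
      have hgz : ((g : ℤ)) ≠ 0 := by exact_mod_cast hg0.ne'
      have hN2 : (N : ℤ) = (g : ℤ) * ((N / g : ℕ) : ℤ) := by
        exact_mod_cast (Nat.mul_div_cancel' (Nat.gcd_dvd_right (e ^ 2) N)).symm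
      have he2 : ((e : ℤ)) ^ 2 = (g : ℤ) * ((e ^ 2 / g : ℕ) : ℤ) := by
        exact_mod_cast (Nat.mul_div_cancel' (Nat.gcd_dvd_left (e ^ 2) N)).symm
      have hdk : ((N / g : ℕ) : ℤ) ∣ k := by
        have h11 : (g : ℤ) * ((N / g : ℕ) : ℤ) ∣ (g : ℤ) * (((e ^ 2 / g : ℕ) : ℤ) * k) := by
          rw [← hN2, ← mul_assoc, ← he2]; exact hNk
        have h12 := (mul_dvd_mul_iff_left hgz).mp h11
        have hcop4 : IsCoprime (((N / g : ℕ) : ℤ)) (((e ^ 2 / g : ℕ) : ℤ)) :=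
          Nat.isCoprime_iff_coprime.mpr (Nat.coprime_div_gcd_div_gcd hg0).symm
        exact hcop4.dvd_of_dvd_mul_right (by rwa [mul_comm] at h12)
      have hA : (a : ℤ) < ((N / g : ℕ) : ℤ) := by exact_mod_cast ha
      have hA' : (a' : ℤ) < ((N / g : ℕ) : ℤ) := by exact_mod_cast ha'
      have hk0 : k = 0 := by
        refine Int.eq_zero_of_abs_lt_dvd hdk ?_
        rw [hk, abs_lt]
        constructor <;> omega
      rw [hk] at hk0
      omega
end

section
/- For the quasi-modular Eisenstein series G₂(τ) = −1/24 + ∑_{n ≥ 1} σ₁(n) qⁿ and any nearly holomorphic modular form f of weight 2 for SL₂(Z) (a meromorphic modular form holomorphic on the upper half-plane with a pole of finite order at the cusp), the constant term of the Fourier expansion of f is zero. -/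
open scoped MatrixGroups
open Complex

noncomputable section CTZAux

/-- `2πi n` -/
private def kk (n : ℤ) : ℂ := 2 * Real.pi * Complex.I * n

private lemma kk_ne_zero {n : ℤ} (hn : n ≠ 0) : kk n ≠ 0 := by
  simp [kk, Real.pi_ne_zero, Complex.I_ne_zero, hn]

private lemma norm_kk_ge_one {n : ℤ} (hn : n ≠ 0) : 1 ≤ ‖kk n‖ := by
  have h1 : ‖kk n‖ = 2 * Real.pi * |(n : ℝ)| := by
    simp [kk, norm_mul, Complex.norm_real, Real.pi_nonneg, abs_of_nonneg,
      Complex.norm_intCast]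
  have h2 : (1 : ℝ) ≤ |(n : ℝ)| := by
    rw [← Int.cast_abs]
    exact_mod_cast Int.one_le_abs hn
  nlinarith [Real.pi_gt_three]

private lemma norm_term (a : ℂ) (n : ℤ) (τ : ℂ) :
    ‖a * Complex.exp (kk n * τ)‖ = ‖a‖ * Real.exp (-(2 * Real.pi * n * τ.im)) := by
  simp only [norm_mul, Complex.norm_exp]
  congr 2
  have h : kk n * τ = ((2 * Real.pi * n : ℝ) : ℂ) * (τ * Complex.I) := by
    simp only [kk]; push_cast; ring
  rw [h, Complex.re_ofReal_mul, Complex.mul_I_re]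
  ring

/-- the terms of the primitive -/
private def gg (c : ℤ → ℂ) (n : ℤ) (τ : ℂ) : ℂ :=
  if n = 0 then c 0 * τ else c n / kk n * Complex.exp (kk n * τ)

/-- the primitive -/
private def FF (c : ℤ → ℂ) (τ : ℂ) : ℂ := ∑' n : ℤ, gg c n τ

private lemma summable_gg_s18 (c : ℤ → ℂ) (τ : ℂ)
    (hs : Summable fun n : ℤ => c n * Complex.exp (kk n * τ)) :
    Summable fun n : ℤ => gg c n τ := by
  have hn : Summable fun n : ℤ => ‖c n * Complex.exp (kk n * τ)‖ := summable_norm_iff.2 hs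
  refine Summable.of_norm_bounded (g := fun n => (1 + ‖τ‖) * ‖c n * Complex.exp (kk n * τ)‖)
    (hn.mul_left _) ?_
  intro n
  by_cases h : n = 0
  · subst h
    have hg0 : gg c 0 τ = c 0 * τ := by simp [gg]
    have hk0 : kk 0 * τ = 0 := by simp [kk]
    show ‖gg c 0 τ‖ ≤ (1 + ‖τ‖) * ‖c 0 * Complex.exp (kk 0 * τ)‖
    rw [hg0, hk0, Complex.exp_zero, mul_one, norm_mul]
    nlinarith [norm_nonneg (c 0), norm_nonneg τ]
  · have hgn : gg c n τ = c n / kk n * Complex.exp (kk n * τ) := by simp [gg, h]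
    rw [hgn]
    have h1 : ‖c n / kk n * Complex.exp (kk n * τ)‖
        = ‖c n * Complex.exp (kk n * τ)‖ / ‖kk n‖ := by
      rw [norm_mul, norm_div, norm_mul]; ring
    rw [h1]
    calc ‖c n * Complex.exp (kk n * τ)‖ / ‖kk n‖
        ≤ ‖c n * Complex.exp (kk n * τ)‖ := div_le_self (norm_nonneg _) (norm_kk_ge_one h)
      _ ≤ (1 + ‖τ‖) * ‖c n * Complex.exp (kk n * τ)‖ :=
          le_mul_of_one_le_left (norm_nonneg _) (by linarith [norm_nonneg τ])

private lemma hasDerivAt_gg (c : ℤ → ℂ) (n : ℤ) (x : ℂ) :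
    HasDerivAt (gg c n) (c n * Complex.exp (kk n * x)) x := by
  by_cases h : n = 0
  · subst h
    have hg : gg c 0 = fun τ => c 0 * τ := by funext τ; simp [gg]
    rw [hg]
    have hk0 : kk 0 * x = 0 := by simp [kk]
    simpa [hk0] using (hasDerivAt_id x).const_mul (c 0)
  · have hg : gg c n = fun τ => c n / kk n * Complex.exp (kk n * τ) := by
      funext τ; simp [gg, h]
    rw [hg]
    have h1 : HasDerivAt (fun τ : ℂ => kk n * τ) (kk n) x := by
      simpa using (hasDerivAt_id x).const_mul (kk n)
    have h3 := (h1.cexp).const_mul (c n / kk n)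
    refine h3.congr_deriv ?_
    rw [div_mul_eq_mul_div, div_eq_iff (kk_ne_zero h)]
    ring

private lemma hasDerivAt_FF (c : ℤ → ℂ)
    (hs : ∀ τ : ℂ, 0 < τ.im → Summable fun n : ℤ => c n * Complex.exp (kk n * τ))
    {τ : ℂ} (hτ : 0 < τ.im) :
    HasDerivAt (FF c) (∑' n : ℤ, c n * Complex.exp (kk n * τ)) τ := by
  set y := τ.im with hy
  set t : Set ℂ := {σ | y / 2 < σ.im} ∩ {σ | σ.im < 2 * y} with ht_def
  have ht : IsOpen t :=
    (isOpen_lt continuous_const Complex.continuous_im).inter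
      (isOpen_lt Complex.continuous_im continuous_const)
  have hconv : Convex ℝ t := (convex_halfSpace_im_gt _).inter (convex_halfSpace_im_lt _)
  have him1 : (0:ℝ) < (Complex.I * ((y/2 : ℝ) : ℂ)).im := by
    simp only [Complex.mul_im, Complex.I_re, Complex.I_im, Complex.ofReal_re,
      Complex.ofReal_im, zero_mul, one_mul, mul_zero, add_zero, zero_add]
    linarith
  have him2 : (0:ℝ) < (Complex.I * ((2*y : ℝ) : ℂ)).im := by
    simp only [Complex.mul_im, Complex.I_re, Complex.I_im, Complex.ofReal_re,
      Complex.ofReal_im, zero_mul, one_mul, mul_zero, add_zero, zero_add]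
    linarith
  set u : ℤ → ℝ := fun n => ‖c n * Complex.exp (kk n * (Complex.I * ((y/2 : ℝ) : ℂ)))‖
      + ‖c n * Complex.exp (kk n * (Complex.I * ((2*y : ℝ) : ℂ)))‖ with hu_def
  have hu : Summable u :=
    (summable_norm_iff.2 (hs _ him1)).add (summable_norm_iff.2 (hs _ him2))
  have hτt : τ ∈ t := by
    constructor
    · show y / 2 < τ.im; linarith
    · show τ.im < 2 * y; linarith
  have hbound : ∀ (n : ℤ), ∀ σ ∈ t, ‖c n * Complex.exp (kk n * σ)‖ ≤ u n := by
    intro n σ hσ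
    obtain ⟨h1, h2⟩ := hσ
    have h1' : y / 2 < σ.im := h1
    have h2' : σ.im < 2 * y := h2
    rw [hu_def]
    simp only []
    rw [norm_term, norm_term, norm_term]
    have e1 : (Complex.I * ((y/2 : ℝ) : ℂ)).im = y / 2 := by
      simp
    have e2 : (Complex.I * ((2*y : ℝ) : ℂ)).im = 2 * y := by
      simp
    rw [e1, e2]
    have hcn : (0:ℝ) ≤ ‖c n‖ := norm_nonneg _
    rcases le_or_gt 0 (n : ℝ) with hn | hn
    · have hmono : -(2 * Real.pi * (n:ℝ) * σ.im) ≤ -(2 * Real.pi * (n:ℝ) * (y/2)) :=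
        neg_le_neg (mul_le_mul_of_nonneg_left h1'.le
          (show (0:ℝ) ≤ 2 * Real.pi * (n:ℝ) by positivity))
      have : ‖c n‖ * Real.exp (-(2 * Real.pi * n * σ.im))
          ≤ ‖c n‖ * Real.exp (-(2 * Real.pi * n * (y/2))) :=
        mul_le_mul_of_nonneg_left (Real.exp_le_exp.2 hmono) hcn
      have hpos : 0 ≤ ‖c n‖ * Real.exp (-(2 * Real.pi * n * (2*y))) := by positivity
      linarith
    · have hnp : 2 * Real.pi * (n:ℝ) ≤ 0 := by nlinarith [Real.pi_pos]
      have hmono : -(2 * Real.pi * (n:ℝ) * σ.im) ≤ -(2 * Real.pi * (n:ℝ) * (2*y)) :=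
        neg_le_neg (mul_le_mul_of_nonpos_left h2'.le hnp)
      have : ‖c n‖ * Real.exp (-(2 * Real.pi * n * σ.im))
          ≤ ‖c n‖ * Real.exp (-(2 * Real.pi * n * (2*y))) :=
        mul_le_mul_of_nonneg_left (Real.exp_le_exp.2 hmono) hcn
      have hpos : 0 ≤ ‖c n‖ * Real.exp (-(2 * Real.pi * n * (y/2))) := by positivity
      linarith
  exact hasDerivAt_tsum_of_isPreconnected hu ht hconv.isPreconnected
    (fun n σ _ => hasDerivAt_gg c n σ) hbound hτt (summable_gg_s18 c τ (hs τ hτ)) hτt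

private lemma FF_periodic (c : ℤ → ℂ) (τ : ℂ)
    (hs : Summable fun n : ℤ => c n * Complex.exp (kk n * τ)) :
    FF c (τ + 1) = FF c τ + c 0 := by
  have hsg := summable_gg_s18 c τ hs
  have hind : Summable (fun n : ℤ => if n = 0 then c 0 else 0) :=
    summable_of_ne_finset_zero (s := {0}) (by intro b hb; simp at hb; simp [hb])
  have hterm : ∀ n : ℤ, gg c n (τ + 1) = gg c n τ + (if n = 0 then c 0 else 0) := by
    intro n
    by_cases h : n = 0
    · subst h
      have e1 : gg c 0 (τ+1) = c 0 * (τ+1) := by simp [gg]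
      have e2 : gg c 0 τ = c 0 * τ := by simp [gg]
      rw [e1, e2]; simp; ring
    · have e1 : gg c n (τ+1) = c n / kk n * Complex.exp (kk n * (τ+1)) := by simp [gg, h]
      have e2 : gg c n τ = c n / kk n * Complex.exp (kk n * τ) := by simp [gg, h]
      rw [e1, e2, if_neg h, add_zero, mul_add, mul_one, Complex.exp_add]
      have hek : Complex.exp (kk n) = 1 := by
        rw [show kk n = (n:ℂ) * (2 * Real.pi * Complex.I) by unfold kk; ring]
        exact Complex.exp_int_mul_two_pi_mul_I n
      rw [hek, mul_one]
  show (∑' n : ℤ, gg c n (τ+1)) = (∑' n : ℤ, gg c n τ) + c 0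
  calc (∑' n : ℤ, gg c n (τ+1))
      = ∑' n : ℤ, (gg c n τ + if n = 0 then c 0 else 0) := tsum_congr hterm
    _ = (∑' n : ℤ, gg c n τ) + ∑' n : ℤ, (if n = 0 then c 0 else 0) := Summable.tsum_add hsg hind
    _ = (∑' n : ℤ, gg c n τ) + c 0 := by rw [tsum_ite_eq]

end CTZAux

/-- Any nearly holomorphic (weakly holomorphic) modular form of weight `2` for
`SL₂(ℤ)` — a holomorphic function on the upper half-plane transforming with weight
`2` and with a Fourier expansion `∑_{n ≥ −n₀} c(n) qⁿ` — has vanishing constant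
Fourier coefficient: `c(0) = 0`. -/
theorem constant_term_eq_zero_of_weakly_holomorphic_weight_two
    (f : ℂ → ℂ)
    (hol : DifferentiableOn ℂ f {τ : ℂ | 0 < τ.im})
    (hmod : ∀ γ : SL(2, ℤ), ∀ τ : ℂ, 0 < τ.im →
      f ((((γ 0 0 : ℤ) : ℂ) * τ + ((γ 0 1 : ℤ) : ℂ)) /
          (((γ 1 0 : ℤ) : ℂ) * τ + ((γ 1 1 : ℤ) : ℂ))) =
        (((γ 1 0 : ℤ) : ℂ) * τ + ((γ 1 1 : ℤ) : ℂ)) ^ 2 * f τ)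
    (n₀ : ℕ) (c : ℤ → ℂ)
    (hc : ∀ n : ℤ, n < -(n₀ : ℤ) → c n = 0)
    (hsum : ∀ τ : ℂ, 0 < τ.im →
      HasSum (fun n : ℤ => c n * Complex.exp (2 * Real.pi * Complex.I * n * τ)) (f τ)) :
    c 0 = 0 := by
  -- summability in `kk` form
  have hsk : ∀ τ : ℂ, 0 < τ.im → Summable fun n : ℤ => c n * Complex.exp (kk n * τ) :=
    fun τ hτ => (hsum τ hτ).summable
  -- the primitive has derivative f
  have hFd : ∀ τ : ℂ, 0 < τ.im → HasDerivAt (FF c) (f τ) τ := by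
    intro τ hτ
    have h := hasDerivAt_FF c hsk hτ
    rwa [show (∑' n : ℤ, c n * Complex.exp (kk n * τ)) = f τ from (hsum τ hτ).tsum_eq] at h
  -- inversion invariance
  have hGd : ∀ σ : ℂ, 0 < σ.im →
      HasDerivAt (fun σ : ℂ => FF c (-σ⁻¹) - FF c σ) 0 σ := by
    intro σ hσ
    have hσ0 : σ ≠ 0 := by
      intro h; rw [h] at hσ; simp at hσ
    have him : 0 < (-σ⁻¹).im := by
      rw [Complex.neg_im, Complex.inv_im, neg_div, neg_neg]
      exact div_pos hσ (Complex.normSq_pos.2 hσ0)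
    have h1 : HasDerivAt (fun σ : ℂ => -σ⁻¹) ((σ^2)⁻¹) σ := by
      simpa using (hasDerivAt_inv hσ0).fun_neg
    have h2 := (hFd _ him).comp σ h1
    have hfS : f (-σ⁻¹) = σ ^ 2 * f σ := by
      have h := hmod ModularGroup.S σ hσ
      simp only [ModularGroup.coe_S] at h
      norm_num at h
      rw [show (-σ⁻¹ : ℂ) = -1 / σ by rw [neg_div, one_div]]
      exact h
    have h3 : HasDerivAt (fun σ : ℂ => FF c (-σ⁻¹)) (f σ) σ := by
      have e : f (-σ⁻¹) * (σ ^ 2)⁻¹ = f σ := by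
        rw [hfS]
        field_simp
      rw [← e]
      exact h2
    simpa using h3.fun_sub (hFd σ hσ)
  -- constancy of the inversion difference, and value 0 at I
  have hopen : IsOpen {τ : ℂ | 0 < τ.im} := isOpen_lt continuous_const Complex.continuous_im
  have hconst : ∀ σ : ℂ, 0 < σ.im → FF c (-σ⁻¹) = FF c σ := by
    intro σ hσ
    have hI : (0:ℝ) < Complex.I.im := by simp
    have hzero : (ContinuousLinearMap.smulRight (1 : ℂ →L[ℂ] ℂ) (0 : ℂ)) = 0 := by
      ext x
      simp
    have hcst := (convex_halfSpace_im_gt 0).is_const_of_fderivWithin_eq_zero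
      (𝕜 := ℂ) (f := fun σ : ℂ => FF c (-σ⁻¹) - FF c σ)
      (fun x hx => ((hGd x hx).differentiableAt).differentiableWithinAt)
      (fun x hx => by
        rw [fderivWithin_of_isOpen hopen hx]
        rw [(hGd x hx).hasFDerivAt.fderiv]
        exact hzero)
      (show σ ∈ {τ : ℂ | 0 < τ.im} from hσ)
      (show Complex.I ∈ {τ : ℂ | 0 < τ.im} from hI)
    have hGI : FF c (-Complex.I⁻¹) - FF c Complex.I = 0 := by
      rw [Complex.inv_I, neg_neg, sub_self]
    have hcst2 : FF c (-σ⁻¹) - FF c σ = FF c (-Complex.I⁻¹) - FF c Complex.I := hcst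
    linear_combination hcst2 + hGI
  -- the special point ρ
  set ρ : ℂ := ⟨-1/2, Real.sqrt 3 / 2⟩ with hρ_def
  have hs3 : Real.sqrt 3 * Real.sqrt 3 = 3 := Real.mul_self_sqrt (by norm_num)
  have h3pos : 0 < Real.sqrt 3 := Real.sqrt_pos.2 (by norm_num)
  have hρim : ρ.im = Real.sqrt 3 / 2 := rfl
  have hρre : ρ.re = -1/2 := rfl
  have hρ : 0 < ρ.im := by rw [hρim]; positivity
  have hρ1 : 0 < (ρ + 1).im := by
    simpa [Complex.add_im] using hρ
  have hρ1ne : ρ + 1 ≠ 0 := by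
    intro h
    rw [h] at hρ1
    simp at hρ1
  have hρsq : ρ * ρ + ρ + 1 = 0 := by
    apply Complex.ext
    · simp only [Complex.add_re, Complex.mul_re, Complex.one_re, hρre, hρim, Complex.zero_re]
      nlinarith
    · simp only [Complex.add_im, Complex.mul_im, Complex.one_im, hρre, hρim, Complex.zero_im]
      ring
  have hfix : -(ρ + 1)⁻¹ = ρ := by
    rw [neg_eq_iff_eq_neg]
    exact inv_eq_of_mul_eq_one_right (by linear_combination -hρsq)
  have k1 : FF c (ρ + 1) = FF c ρ + c 0 := FF_periodic c ρ (hsk ρ hρ)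
  have k2 : FF c (-(ρ + 1)⁻¹) = FF c (ρ + 1) := hconst (ρ + 1) hρ1
  rw [hfix, k1] at k2
  linear_combination -k2
end
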